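/- arXiv:1709.07312 — 18 statements merged into one kernel-verified Lean document; each statement's English description precedes it below -/
import Mathlib

section
/- If f : ℕ → ℝ is a sequence and u, v, w are positive integers with vw odd, then ∑_{k=1}^{w} (−1)^{k−1} [f(uk+uv) + f(uk)] = ∑_{k=1}^{v} (−1)^{k−1} [f(uk+uw) + f(uk)]. -/
open Finset

lemma key_aux (f : ℕ → ℝ) (u v : ℕ) (hv : Odd v) (w : ℕ) :
    ∑ k ∈ Icc 1 w, (-1 : ℝ)^(k-1) * (f (u*k + u*v) + f (u*k)) =
    (∑ k ∈ Icc 1 v, (-1 : ℝ)^(k-1) * f (u*k)) +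
    (∑ k ∈ Icc 1 w, (-1 : ℝ)^(k-1) * f (u*k)) -
    ∑ k ∈ Icc 1 (v+w), (-1 : ℝ)^(k-1) * f (u*k) := by
  induction w with
  | zero => simp
  | succ n ih =>
    rw [Finset.sum_Icc_succ_top (by omega : 1 ≤ n+1),
        Finset.sum_Icc_succ_top (by omega : 1 ≤ n+1),
        show v + (n+1) = (v+n)+1 by ring,
        Finset.sum_Icc_succ_top (by omega : 1 ≤ v+n+1), ih]
    have h1 : n + 1 - 1 = n := by omega
    have h2 : v + n + 1 - 1 = v + n := by omega
    have h3 : (-1 : ℝ)^(v+n) = -(-1)^n := by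
      rw [pow_add, hv.neg_one_pow]; ring
    have h4 : u*(n+1) + u*v = u*(v+n+1) := by ring
    rw [h1, h2, h3, h4]
    ring

theorem stmt2 (f : ℕ → ℝ) (u v w : ℕ) (hu : 0 < u) (hv : 0 < v) (hw : 0 < w)
    (hodd : Odd (v * w)) :
    ∑ k ∈ Icc 1 w, (-1 : ℝ)^(k-1) * (f (u*k + u*v) + f (u*k)) =
    ∑ k ∈ Icc 1 v, (-1 : ℝ)^(k-1) * (f (u*k + u*w) + f (u*k)) := by
  rw [Nat.odd_mul] at hodd
  rw [key_aux f u v hodd.1 w, key_aux f u w hodd.2 v, add_comm v w]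
  ring
end

section
/- For integers a, b, c with a even, F_a · G_{2b+a+c} = F_{a+b} · G_{a+b+c} − F_b · G_{b+c}. -/
theorem stmt3 (F G : ℤ → ℤ)
    (hF0 : F 0 = 0) (hF1 : F 1 = 1) (hF : ∀ n : ℤ, F (n+1) = F n + F (n-1))
    (hG : ∀ n : ℤ, G (n+1) = G n + G (n-1))
    (a b c : ℤ) (ha : Even a) :
    F a * G (2*b + a + c) = F (a+b) * G (a+b+c) - F b * G (b+c) := by
  have hFneg1 : F (-1) = 1 := by
    have h := hF 0
    simp [hF0, hF1] at h
    linarith [h]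
  -- addition formula for G
  have addG : ∀ n k : ℤ, G (n+k) = F k * G (n+1) + F (k-1) * G n := by
    intro n k
    have key : ∀ k : ℤ, (G (n+k) = F k * G (n+1) + F (k-1) * G n) ∧
        (G (n+k+1) = F (k+1) * G (n+1) + F k * G n) := by
      intro k
      induction k using Int.induction_on with
      | zero =>
        constructor
        · linear_combination (norm := ring_nf) -G (n+1) * hF0 - G n * hFneg1
        · linear_combination (norm := ring_nf) -G (n+1) * hF1 - G n * hF0
      | succ k ih =>
        obtain ⟨h1, h2⟩ := ih
        constructor
        · linear_combination (norm := ring_nf) h2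
        · linear_combination (norm := ring_nf)
            hG (n+(k:ℤ)+1) + h2 + h1 - G (n+1) * hF ((k:ℤ)+1) - G n * hF (k:ℤ)
      | pred k ih =>
        obtain ⟨h1, h2⟩ := ih
        constructor
        · linear_combination (norm := ring_nf)
            -hG (n + -(k:ℤ)) + h2 - h1 + G (n+1) * hF (-(k:ℤ)) + G n * hF (-(k:ℤ)-1)
        · linear_combination (norm := ring_nf) h1
    exact (key k).1
  -- flip identity for the Fibonacci determinant
  have flip : ∀ x : ℤ, F (x+b+1) * F x - F (x+1) * F (x+b) =
      -(F (x+b) * F (x-1) - F x * F (x+b-1)) := by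
    intro x
    linear_combination (norm := ring_nf) F x * hF (x+b) - F (x+b) * hF x
  obtain ⟨k, rfl⟩ := ha
  have key : ∀ k : ℤ, F (k+k+b) * F (k+k-1) - F (k+k) * F (k+k+b-1) = F b := by
    intro k
    induction k using Int.induction_on with
    | zero =>
      linear_combination (norm := ring_nf) F b * hFneg1 - F (b-1) * hF0
    | succ k ih =>
      linear_combination (norm := ring_nf)
        ih + flip ((k:ℤ)+(k:ℤ)+1) - flip ((k:ℤ)+(k:ℤ))
    | pred k ih =>
      linear_combination (norm := ring_nf)
        ih - flip (-(k:ℤ) + -(k:ℤ) - 1) + flip (-(k:ℤ) + -(k:ℤ) - 2)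
  have e1 := addG (b+c) (k+k+b)
  have e2 := addG (b+c) (k+k)
  linear_combination (norm := ring_nf) F (k+k) * e1 - F (k+k+b) * e2 - G (b+c) * key k
end

section
/- For integers a, b, c with a odd, F_a · G_{2b+a+c} = F_{a+b} · G_{a+b+c} + F_b · G_{b+c}. -/
theorem stmt4 (F G : ℤ → ℤ)
    (hF0 : F 0 = 0) (hF1 : F 1 = 1) (hF : ∀ n : ℤ, F (n+1) = F n + F (n-1))
    (hG : ∀ n : ℤ, G (n+1) = G n + G (n-1))
    (a b c : ℤ) (ha : Odd a) :
    F a * G (2*b + a + c) = F (a+b) * G (a+b+c) + F b * G (b+c) := by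
  have hFm1 : F (-1) = 1 := by
    linear_combination (norm := ring_nf) hF1 - hF 0 - hF0
  -- addition formula for any sequence with the Fibonacci recurrence
  have add : ∀ (H : ℤ → ℤ), (∀ n : ℤ, H (n+1) = H n + H (n-1)) →
      ∀ m n : ℤ, H (m + n) = F m * H (n+1) + F (m-1) * H n := by
    intro H hH m
    induction m using Int.induction_on with
    | zero =>
      intro n
      linear_combination (norm := ring_nf) (- H (n+1)) * hF0 - H n * hFm1
    | succ k ih =>
      intro n
      linear_combination (norm := ring_nf)
        ih (n+1) + F k * hH (n+1) - H (n+1) * hF k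
    | pred k ih =>
      intro n
      linear_combination (norm := ring_nf)
        ih (n-1) - F (-(k:ℤ)-1) * hH n + H n * hF (-(k:ℤ)-1)
  -- Cassini-type sign flip
  have step : ∀ m : ℤ, F (m+1) * F (m+1) - F (m+1) * F m - F m * F m
      = -(F m * F m - F m * F (m-1) - F (m-1) * F (m-1)) := by
    intro m
    linear_combination (norm := ring_nf) (F (m+1) + F (m-1)) * hF m
  -- Cassini at odd indices
  have cass : ∀ k : ℤ, F (2*k+1) * F (2*k+1) - F (2*k+1) * F (2*k)
      - F (2*k) * F (2*k) = 1 := by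
    intro k
    induction k using Int.induction_on with
    | zero =>
      linear_combination (norm := ring_nf) (F 1 + 1) * hF1 - (F 1 + F 0) * hF0
    | succ k ih =>
      linear_combination (norm := ring_nf) step (2*k+2) - step (2*k+1) + ih
    | pred k ih =>
      linear_combination (norm := ring_nf) step (-2*(k:ℤ)-1) - step (-2*(k:ℤ)) + ih
  obtain ⟨k, hk⟩ := ha
  subst hk
  have hc : F (2*k+1) * F (2*k+1) - F (2*k+1) * F (2*k) - F (2*k) * F (2*k) = 1 :=
    cass k
  set A : ℤ := 2*k+1 with hA
  have H1 := add G hG (A+b) (b+c)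
  have H2 := add G hG A (b+c)
  have H3 := add F hF A b
  have H4 := add F hF A (b-1)
  have H5 := hF b
  have hc' : F A * F A - F A * F (A-1) - F (A-1) * F (A-1) = 1 := by
    rw [hA] at hc ⊢; linear_combination (norm := ring_nf) hc
  linear_combination (norm := ring_nf)
    F A * H1 - F (A+b) * H2
      + G (b+c) * (F A * H4 - F (A-1) * H3 - F A * F (A-1) * H5 + F b * hc')
end

section
/- For integers a, b: if a is even then L_a · G_b = G_{b+a} + G_{b−a}, and if a is odd then L_a · G_b = G_{b+a} − G_{b−a}. -/
private def eps (a : ℤ) : ℤ := if Even a then 1 else -1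

private lemma eps_succ (a : ℤ) : eps (a+1) = - eps a := by
  unfold eps
  by_cases h : Even a <;> simp [h, Int.even_add_one]

private lemma key (L G : ℤ → ℤ)
    (hL0 : L 0 = 2) (hL1 : L 1 = 1) (hL : ∀ n : ℤ, L (n+1) = L n + L (n-1))
    (hG : ∀ n : ℤ, G (n+1) = G n + G (n-1)) :
    ∀ a b : ℤ, L a * G b = G (b+a) + eps a * G (b-a) := by
  have P0 : ∀ b : ℤ, L 0 * G b = G (b+0) + eps 0 * G (b-0) := by
    intro b; simp [hL0, eps]; ring
  have P1 : ∀ b : ℤ, L 1 * G b = G (b+1) + eps 1 * G (b-1) := by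
    intro b
    have h := hG b
    have he : eps 1 = -1 := by simp [eps]
    rw [hL1, he]; linarith
  have stepUp : ∀ n : ℤ, (∀ b, L n * G b = G (b+n) + eps n * G (b-n)) →
      (∀ b, L (n+1) * G b = G (b+(n+1)) + eps (n+1) * G (b-(n+1))) →
      (∀ b, L (n+2) * G b = G (b+(n+2)) + eps (n+2) * G (b-(n+2))) := by
    intro n hn hn1 b
    have hLrw : L (n+2) = L (n+1) + L n := by
      have := hL (n+1)
      rw [show n+1+1 = n+2 by ring, show n+1-1 = n by ring] at this
      exact this
    have h1 := hn b
    have h2 := hn1 b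
    have hg1 : G (b+(n+2)) = G (b+(n+1)) + G (b+n) := by
      rw [show b+(n+2) = b+n+1+1 by ring, hG (b+n+1),
        show b+n+1-1 = b+n by ring, show b+n+1 = b+(n+1) by ring]
    have hg2 : G (b-n) = G (b-(n+1)) + G (b-(n+2)) := by
      rw [show b-n = b-n-1+1 by ring, hG (b-n-1),
        show b-n-1-1 = b-(n+2) by ring, show b-n-1 = b-(n+1) by ring]
    have he1 : eps (n+1) = - eps n := eps_succ n
    have he2 : eps (n+2) = eps n := by
      have := eps_succ (n+1); rw [show n+1+1 = n+2 by ring] at this; rw [this, he1]; ring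
    rw [hLrw, he2]
    linear_combination h1 + h2 - hg1 + eps n * hg2 + G (b-(n+1)) * he1
  have stepDown : ∀ n : ℤ, (∀ b, L n * G b = G (b+n) + eps n * G (b-n)) →
      (∀ b, L (n+1) * G b = G (b+(n+1)) + eps (n+1) * G (b-(n+1))) →
      (∀ b, L (n-1) * G b = G (b+(n-1)) + eps (n-1) * G (b-(n-1))) := by
    intro n hn hn1 b
    have hLrw : L (n-1) = L (n+1) - L n := by have := hL n; linarith
    have h1 := hn b
    have h2 := hn1 b
    have hg1 : G (b+(n+1)) = G (b+n) + G (b+(n-1)) := by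
      rw [show b+(n+1) = b+n+1 by ring, hG (b+n), show b+n-1 = b+(n-1) by ring]
    have hg2 : G (b-(n-1)) = G (b-n) + G (b-(n+1)) := by
      rw [show b-(n-1) = b-n+1 by ring, hG (b-n), show b-n-1 = b-(n+1) by ring]
    have he1 : eps (n+1) = - eps n := eps_succ n
    have he2 : eps (n-1) = - eps n := by
      have := eps_succ (n-1); rw [show n-1+1 = n by ring] at this; linarith
    rw [hLrw, he2]
    linear_combination h2 - h1 + hg1 + eps n * hg2 + G (b-(n+1)) * he1
  have main : ∀ a : ℤ, (∀ b, L a * G b = G (b+a) + eps a * G (b-a)) ∧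
      (∀ b, L (a+1) * G b = G (b+(a+1)) + eps (a+1) * G (b-(a+1))) := by
    intro a
    induction a using Int.induction_on with
    | zero => exact ⟨P0, by simpa using P1⟩
    | succ n ih =>
      refine ⟨ih.2, ?_⟩
      have h := stepUp n ih.1 ih.2
      rw [show (n:ℤ)+1+1 = n+2 by ring]
      exact h
    | pred n ih =>
      have h := stepDown (-n) ih.1 ih.2
      rw [show -(n:ℤ)-1 = -n-1 by ring] at h ⊢
      refine ⟨h, ?_⟩
      rw [show -(n:ℤ)-1+1 = -n by ring]
      exact ih.1
  intro a b; exact (main a).1 b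

theorem stmt5 (L G : ℤ → ℤ)
    (hL0 : L 0 = 2) (hL1 : L 1 = 1) (hL : ∀ n : ℤ, L (n+1) = L n + L (n-1))
    (hG : ∀ n : ℤ, G (n+1) = G n + G (n-1))
    (a b : ℤ) :
    (Even a → L a * G b = G (b+a) + G (b-a)) ∧
    (Odd a → L a * G b = G (b+a) - G (b-a)) := by
  have h := key L G hL0 hL1 hL hG a b
  constructor
  · intro ha
    have : eps a = 1 := by simp [eps, ha]
    rw [this] at h; linarith
  · intro ha
    have : eps a = -1 := by simp [eps, Int.not_even_iff_odd.mpr ha]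
    rw [this] at h; linarith
end

section
/- For integers a, b: F_b · G_a − F_a · G_b = (−1)^a · G_0 · F_{b−a}. -/
theorem stmt6 (F G : ℤ → ℤ)
    (hF0 : F 0 = 0) (hF1 : F 1 = 1) (hF : ∀ n : ℤ, F (n+1) = F n + F (n-1))
    (hG : ∀ n : ℤ, G (n+1) = G n + G (n-1))
    (a b : ℤ) :
    F b * G a - F a * G b = (-1)^a.natAbs * G 0 * F (b-a) := by
  set s : ℤ → ℤ := fun a => (-1:ℤ)^a.natAbs with hs
  have hs1 : ∀ a : ℤ, s (a+1) = - s a := by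
    intro a
    rcases Int.even_or_odd a with h | h
    · have h1 : Odd (a+1) := Even.add_one h
      have e1 : Even a.natAbs := Int.natAbs_even.mpr h
      have e2 : Odd (a+1).natAbs := Int.natAbs_odd.mpr h1
      simp [hs, e1.neg_one_pow, e2.neg_one_pow]
    · have h1 : Even (a+1) := Odd.add_one h
      have e1 : Odd a.natAbs := Int.natAbs_odd.mpr h
      have e2 : Even (a+1).natAbs := Int.natAbs_even.mpr h1
      simp [hs, e1.neg_one_pow, e2.neg_one_pow]
  have hF' : ∀ n : ℤ, F (n+2) = F (n+1) + F n := by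
    intro n
    have h := hF (n+1)
    have e1 : n+1+1 = n+2 := by ring
    have e2 : n+1-1 = n := by ring
    rw [e1, e2] at h
    exact h
  have hG' : ∀ n : ℤ, G (n+2) = G (n+1) + G n := by
    intro n
    have h := hG (n+1)
    have e1 : n+1+1 = n+2 := by ring
    have e2 : n+1-1 = n := by ring
    rw [e1, e2] at h
    exact h
  -- key identity: F(a+1) G a - F a G(a+1) = s a * G 0
  have key : ∀ c : ℤ, F (c+1) * G c - F c * G (c+1) = s c * G 0 := by
    intro c
    induction c using Int.induction_on with
    | zero => simp [hF0, hF1, hs]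
    | succ n ih =>
        have h1 := hF' n
        have h2 := hG' n
        have h3 := hs1 n
        linear_combination (norm := ring_nf) -ih + G ((n:ℤ)+1) * h1 - F ((n:ℤ)+1) * h2 - G 0 * h3
    | pred n ih =>
        have h1 := hF (-n)
        have h2 := hG (-n)
        have h3 := hs1 (-(n:ℤ)-1)
        have e : -(n:ℤ)-1+1 = -n := by ring
        rw [e] at h3
        linear_combination (norm := ring_nf) -ih + G (-(n:ℤ)) * h1 - F (-(n:ℤ)) * h2 - G 0 * h3
  -- main statement as predicate in b, proved by induction on n = b - a
  have main : ∀ n : ℤ,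
      (F (a+n) * G a - F a * G (a+n) = s a * G 0 * F n) ∧
      (F (a+n+1) * G a - F a * G (a+n+1) = s a * G 0 * F (n+1)) := by
    intro n
    induction n using Int.induction_on with
    | zero =>
        constructor
        · simp [hF0]
        · simpa [hF1] using key a
    | succ n ih =>
        obtain ⟨ih1, ih2⟩ := ih
        have h1 := hF' (a+n)
        have h2 := hG' (a+n)
        have h3 := hF' n
        constructor
        · linear_combination (norm := ring_nf) ih2
        · linear_combination (norm := ring_nf) ih1 + ih2 + G a * h1 - F a * h2 - G 0 * s a * h3
    | pred n ih =>
        obtain ⟨ih1, ih2⟩ := ih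
        have h1 := hF (a-n)
        have h2 := hG (a-n)
        have h3 := hF (-n)
        constructor
        · linear_combination (norm := ring_nf) ih2 - ih1 - G a * h1 + F a * h2 + G 0 * s a * h3
        · linear_combination (norm := ring_nf) ih1
  have := (main (b-a)).1
  have e : a+(b-a) = b := by ring
  rw [e] at this
  simpa [hs] using this
end

section
/- Let G be a generalized Fibonacci sequence with G_0 ≠ 0. If n, q are nonnegative integers, p is a nonzero positive integer, and G_{pk} ≠ 0 for all 1 ≤ k ≤ n+q, then F_{pq} · ∑_{k=1}^{n} (−1)^{pk} / (G_{pk} G_{pk+pq}) = F_{pn} · ∑_{k=1}^{q} (−1)^{pk} / (G_{pk} G_{pk+pn}), where the sums are taken over real numbers. -/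
open Finset

lemma Waux (G : ℕ → ℝ) (hG : ∀ i, G (i+2) = G (i+1) + G i) :
    ∀ j, (Nat.fib (j+1) : ℝ) * G j - (Nat.fib j : ℝ) * G (j+1) = (-1 : ℝ)^j * G 0 := by
  intro j
  induction j with
  | zero => simp
  | succ j ih =>
    have h1 : (Nat.fib (j+2) : ℝ) = Nat.fib (j+1) + Nat.fib j := by
      rw [Nat.fib_add_two]; push_cast; ring
    have h2 := hG j
    rw [h1, h2, pow_succ]
    linear_combination -ih

lemma gadd (G : ℕ → ℝ) (hG : ∀ i, G (i+2) = G (i+1) + G i) :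
    ∀ b a, G (a + b + 1) = (Nat.fib (b+1) : ℝ) * G (a+1) + (Nat.fib b : ℝ) * G a := by
  intro b
  induction b using Nat.twoStepInduction with
  | zero => intro a; simp
  | one => intro a; have := hG a; simp [Nat.fib]; linarith
  | more b ih1 ih2 =>
    intro a
    have e1 : a + (b + 2) + 1 = (a + b + 1) + 2 := by ring
    have e2 : a + (b + 1) + 1 = (a + b + 1) + 1 := by ring
    rw [e1, hG (a+b+1), ← e2, ih2 a, ih1 a]
    have f1 : (Nat.fib (b+3) : ℝ) = Nat.fib (b+2) + Nat.fib (b+1) := by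
      rw [show b+3 = (b+1)+2 from rfl, Nat.fib_add_two]; push_cast; ring
    have f2 : (Nat.fib (b+2) : ℝ) = Nat.fib (b+1) + Nat.fib b := by
      rw [Nat.fib_add_two]; push_cast; ring
    rw [f1, f2]; ring

lemma numid (G : ℕ → ℝ) (hG : ∀ i, G (i+2) = G (i+1) + G i) (m b : ℕ) (hm : 1 ≤ m) :
    (Nat.fib (m+b) : ℝ) * G m - (Nat.fib m : ℝ) * G (m+b) = (-1 : ℝ)^m * G 0 * Nat.fib b := by
  obtain ⟨j, rfl⟩ : ∃ j, m = j + 1 := ⟨m - 1, (Nat.succ_pred_eq_of_pos hm).symm⟩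
  have e : j + 1 + b = j + b + 1 := by ring
  have hfib : (Nat.fib (j+b+1) : ℝ) = Nat.fib j * Nat.fib b + Nat.fib (j+1) * Nat.fib (b+1) := by
    rw [Nat.fib_add]; push_cast; ring
  have hga := gadd G hG b j
  have hW := Waux G hG j
  rw [e, hfib, hga, pow_succ]
  linear_combination (-(Nat.fib b : ℝ)) * hW

lemma shiftsum (f : ℕ → ℝ) (q m : ℕ) :
    ∑ k ∈ Ioc q (m+q), f k = ∑ k ∈ Ioc 0 m, f (k+q) := by
  have h := Finset.sum_map (Ioc 0 m) (addRightEmbedding q) f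
  rw [Finset.map_add_right_Ioc, Nat.zero_add] at h
  simpa using h

lemma sideeq (G : ℕ → ℝ) (hG : ∀ i, G (i+2) = G (i+1) + G i) (hG0 : G 0 ≠ 0)
    (p : ℕ) (hp : 0 < p) (n q : ℕ)
    (hGnz : ∀ k ∈ Icc 1 (n+q), G (p*k) ≠ 0) :
    (Nat.fib (p*q) : ℝ) * ∑ k ∈ Icc 1 n, (-1 : ℝ)^(p*k) / (G (p*k) * G (p*k + p*q)) =
    ((∑ k ∈ Ioc 0 (n+q), (Nat.fib (p*k) : ℝ) / G (p*k))
      - ∑ k ∈ Ioc 0 q, (Nat.fib (p*k) : ℝ) / G (p*k)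
      - ∑ k ∈ Ioc 0 n, (Nat.fib (p*k) : ℝ) / G (p*k)) / G 0 := by
  rw [mul_sum]
  have step : ∀ k ∈ Icc 1 n,
      (Nat.fib (p*q) : ℝ) * ((-1 : ℝ)^(p*k) / (G (p*k) * G (p*k + p*q))) =
      ((Nat.fib (p*(k+q)) : ℝ) / G (p*(k+q)) - (Nat.fib (p*k) : ℝ) / G (p*k)) / G 0 := by
    intro k hk
    simp only [mem_Icc] at hk
    have h1 : G (p*k) ≠ 0 := hGnz k (by simp only [mem_Icc]; omega)
    have h2 : G (p*(k+q)) ≠ 0 := hGnz (k+q) (by simp only [mem_Icc]; omega)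
    have hm1 : 1 ≤ p*k := Nat.mul_pos hp (by omega)
    have hnum := numid G hG (p*k) (p*q) hm1
    have e : p*k + p*q = p*(k+q) := by ring
    rw [e] at hnum
    rw [e]
    rw [div_sub_div _ _ h2 h1]
    have hnum' : (Nat.fib (p*(k+q)) : ℝ) * G (p*k) - G (p*(k+q)) * (Nat.fib (p*k) : ℝ)
        = (-1 : ℝ)^(p*k) * G 0 * Nat.fib (p*q) := by linear_combination hnum
    rw [hnum']
    field_simp
  rw [Finset.sum_congr rfl step]
  rw [← Finset.sum_div, Finset.sum_sub_distrib]
  rw [show Icc 1 n = Ioc 0 n from Finset.Icc_add_one_left_eq_Ioc 0 n]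
  rw [← shiftsum (fun k => (Nat.fib (p*k) : ℝ) / G (p*k)) q n]
  rw [← Finset.sum_Ioc_consecutive (fun k => (Nat.fib (p*k) : ℝ) / G (p*k))
    (Nat.zero_le q) (Nat.le_add_left q n)]
  ring

theorem stmt7 (G : ℕ → ℝ) (hG : ∀ i, G (i+2) = G (i+1) + G i) (hG0 : G 0 ≠ 0)
    (n q p : ℕ) (hp : 0 < p)
    (hGnz : ∀ k ∈ Icc 1 (n+q), G (p*k) ≠ 0) :
    (Nat.fib (p*q) : ℝ) * ∑ k ∈ Icc 1 n, (-1 : ℝ)^(p*k) / (G (p*k) * G (p*k + p*q)) =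
    (Nat.fib (p*n) : ℝ) * ∑ k ∈ Icc 1 q, (-1 : ℝ)^(p*k) / (G (p*k) * G (p*k + p*n)) := by
  have h1 := sideeq G hG hG0 p hp n q hGnz
  have h2 := sideeq G hG hG0 p hp q n (by
    intro k hk
    apply hGnz
    rwa [Nat.add_comm q n] at hk)
  rw [h1, h2, Nat.add_comm q n]
  ring
end

section
/- Let G be a generalized Fibonacci sequence with nonzero terms G_{pk} for 1 ≤ k ≤ n+q. If n and q are nonnegative even integers and p is a positive integer, then F_{pq} · ∑_{k=1}^{n} (−1)^{k(p−1)} / (G_{pk} G_{pk+pq}) = F_{pn} · ∑_{k=1}^{q} (−1)^{k(p−1)} / (G_{pk} G_{pk+pn}). -/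
open Finset

private lemma rep (G : ℕ → ℝ) (hG : ∀ i, G (i+2) = G (i+1) + G i) (a : ℕ) :
    ∀ b, G (a+1+b) = Nat.fib b * G a + Nat.fib (b+1) * G (a+1) := by
  intro b
  induction b using Nat.twoStepInduction with
  | zero => simp
  | one =>
    rw [show a+1+1 = a+2 from rfl, hG a]
    norm_num [Nat.fib_one, Nat.fib_two]
    ring
  | more b ih1 ih2 =>
    have h : a+1+(b+2) = (a+1+b)+2 := by omega
    have f0 : (Nat.fib (b+2) : ℝ) = Nat.fib b + Nat.fib (b+1) := by
      rw [Nat.fib_add_two]; push_cast; ring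
    have f1 : (Nat.fib (b+1+1) : ℝ) = Nat.fib b + Nat.fib (b+1) := f0
    have f2 : (Nat.fib (b+2+1) : ℝ) = Nat.fib (b+1) + Nat.fib (b+2) := by
      rw [show b+2+1 = (b+1)+2 from rfl, Nat.fib_add_two]; push_cast; ring
    rw [h, hG, show a+1+b+1 = a+1+(b+1) from rfl, ih1, ih2]
    linear_combination (-(G a) - G (a+1)) * f0 + (G (a+1)) * f1 - (G (a+1)) * f2

private lemma doc (c : ℕ) : ∀ b, (Nat.fib (b+c) : ℝ) * Nat.fib (b+1) -
    (Nat.fib (b+c+1) : ℝ) * Nat.fib b = (-1)^b * Nat.fib c := by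
  intro b
  induction b with
  | zero => simp
  | succ b ih =>
    have h1 : b+1+c = b+c+1 := by omega
    have h2 : b+c+1+1 = (b+c)+2 := rfl
    rw [h1, h2, Nat.fib_add_two (n := b+c), Nat.fib_add_two (n := b)]
    push_cast
    linear_combination -ih

private lemma phi (G : ℕ → ℝ) (hG : ∀ i, G (i+2) = G (i+1) + G i) (a b c : ℕ) :
    (Nat.fib (b+c) : ℝ) * G (a+1+b) - (Nat.fib b : ℝ) * G (a+1+(b+c)) =
    (-1)^b * Nat.fib c * G (a+1) := by
  rw [rep G hG a b, rep G hG a (b+c)]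
  linear_combination (G (a+1)) * doc c b

private lemma tele (G : ℕ → ℝ) (hG : ∀ i, G (i+2) = G (i+1) + G i)
    (p : ℕ) (hp : 0 < p) (k : ℕ) (hk : 1 ≤ k) :
    ∀ m, (∀ j ≤ m, G (p*(k+j)) ≠ 0) →
    (Nat.fib (p*m) : ℝ) / (G (p*k) * G (p*(k+m))) =
    ∑ j ∈ range m, (-1:ℝ)^(p*j) * Nat.fib p / (G (p*(k+j)) * G (p*(k+j+1))) := by
  intro m
  induction m with
  | zero => simp
  | succ m ih =>
    intro hnz
    rw [Finset.sum_range_succ, ← ih (fun j hj => hnz j (by omega))]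
    have h0 : G (p*k) ≠ 0 := by have := hnz 0 (by omega); simpa using this
    have h1 : G (p*(k+m)) ≠ 0 := hnz m (by omega)
    have h2 : G (p*(k+m+1)) ≠ 0 := hnz (m+1) (le_refl _)
    have hpk : p*k = (p*k - 1) + 1 := by
      have : 1 ≤ p*k := Nat.one_le_iff_ne_zero.mpr (by positivity)
      omega
    have hkey := phi G hG (p*k - 1) (p*m) p
    rw [← hpk] at hkey
    have e1 : p*k + p*m = p*(k+m) := by ring
    have e2 : p*k + (p*m + p) = p*(k+m+1) := by ring
    rw [e1, e2] at hkey
    have e3 : p*(m+1) = p*m + p := by ring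
    have e4 : p*(k+(m+1)) = p*(k+m+1) := rfl
    rw [e3, e4, div_add_div _ _ (mul_ne_zero h0 h1) (mul_ne_zero h1 h2),
      div_eq_div_iff (mul_ne_zero h0 h2)
        (mul_ne_zero (mul_ne_zero h0 h1) (mul_ne_zero h1 h2))]
    linear_combination (G (p*k) * G (p*(k+m)) * G (p*(k+m+1))) * hkey

private lemma teleIcc (h : ℕ → ℝ) : ∀ q, ∑ k ∈ Icc 1 q, (h k - h (k+1)) = h 1 - h (q+1) := by
  intro q
  induction q with
  | zero => simp
  | succ q ih => rw [Finset.sum_Icc_succ_top (by omega), ih]; ring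

private lemma symmL (q : ℕ) (hq : Even q) :
    ∀ m (g : ℕ → ℝ),
    ∑ k ∈ Icc 1 (2*m), ∑ j ∈ range q, (-1:ℝ)^j * g (k+j)
    = ∑ k ∈ Icc 1 q, ∑ j ∈ range (2*m), (-1:ℝ)^j * g (k+j) := by
  intro m
  induction m with
  | zero => simp
  | succ m ih =>
    intro g
    have h1 : 2*(m+1) = (2*m+1)+1 := by ring
    rw [h1, Finset.sum_Icc_succ_top (by omega), Finset.sum_Icc_succ_top (by omega), ih]
    have hR : ∀ k : ℕ, ∑ j ∈ range ((2*m+1)+1), (-1:ℝ)^j * g (k+j)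
        = (∑ j ∈ range (2*m), (-1:ℝ)^j * g (k+j)) + (g (k+2*m) - g (k+(2*m+1))) := by
      intro k
      rw [Finset.sum_range_succ, Finset.sum_range_succ]
      have he : ((-1:ℝ))^(2*m) = 1 := Even.neg_one_pow ⟨m, by ring⟩
      have ho : ((-1:ℝ))^(2*m+1) = -1 := Odd.neg_one_pow ⟨m, by ring⟩
      rw [he, ho]; ring
    simp only [hR]
    rw [Finset.sum_add_distrib]
    have hT : ∑ k ∈ Icc 1 q, (g (k+2*m) - g (k+(2*m+1)))
        = g (1+2*m) - g (q+1+2*m) := by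
      have h5 := teleIcc (fun k => g (k+2*m)) q
      beta_reduce at h5
      rw [← h5]
      apply Finset.sum_congr rfl
      intro k _
      rw [show k+(2*m+1) = k+1+2*m from by omega]
    rw [hT]
    have hL : (∑ j ∈ range q, (-1:ℝ)^j * g (2*m+1+j)) + ∑ j ∈ range q, (-1:ℝ)^j * g ((2*m+1)+1+j)
        = g (1+2*m) - g (q+1+2*m) := by
      have hsum := Finset.sum_range_sub' (fun j => (-1:ℝ)^j * g (2*m+1+j)) q
      beta_reduce at hsum
      rw [← Finset.sum_add_distrib]
      have hterm : ∀ j ∈ range q, (-1:ℝ)^j * g (2*m+1+j) + (-1:ℝ)^j * g ((2*m+1)+1+j)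
          = (-1:ℝ)^j * g (2*m+1+j) - (-1:ℝ)^(j+1) * g (2*m+1+(j+1)) := by
        intro j _
        rw [show (2*m+1)+1+j = 2*m+1+(j+1) from by omega]; ring
      rw [Finset.sum_congr rfl hterm, hsum, hq.neg_one_pow]
      simp only [pow_zero, one_mul, add_zero,
        show 2*m+1+0 = 1+2*m from by omega, show 2*m+1+q = q+1+2*m from by omega]
      rw [show 1+2*m+q = q+1+2*m from by omega]
    linarith [hL]

private lemma side (G : ℕ → ℝ) (hG : ∀ i, G (i+2) = G (i+1) + G i)
    (p : ℕ) (hp : 0 < p) (n q : ℕ)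
    (hGnz : ∀ k ∈ Icc 1 (n+q), G (p*k) ≠ 0) :
    (Nat.fib (p*q) : ℝ) * ∑ k ∈ Icc 1 n, (-1:ℝ)^(k*(p-1)) / (G (p*k) * G (p*k + p*q)) =
    ∑ k ∈ Icc 1 n, ∑ j ∈ range q,
      (-1:ℝ)^j * ((-1:ℝ)^((p-1)*(k+j)) * (Nat.fib p : ℝ) / (G (p*(k+j)) * G (p*(k+j+1)))) := by
  obtain ⟨r, rfl⟩ : ∃ r, p = r + 1 := ⟨p-1, by omega⟩
  simp only [Nat.add_sub_cancel]
  rw [Finset.mul_sum]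
  refine Finset.sum_congr rfl fun k hk => ?_
  rw [Finset.mem_Icc] at hk
  have e1 : (r+1)*k + (r+1)*q = (r+1)*(k+q) := by ring
  rw [e1]
  have ht := tele G hG (r+1) (by omega) k hk.1 q
    (fun j hj => hGnz (k+j) (by rw [Finset.mem_Icc]; omega))
  have e2 : (Nat.fib ((r+1)*q):ℝ) * ((-1:ℝ)^(k*r) / (G ((r+1)*k) * G ((r+1)*(k+q))))
      = (-1:ℝ)^(k*r) * ((Nat.fib ((r+1)*q):ℝ) / (G ((r+1)*k) * G ((r+1)*(k+q)))) := by ring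
  rw [e2, ht, Finset.mul_sum]
  refine Finset.sum_congr rfl fun j _ => ?_
  have he : (-1:ℝ)^(k*r) * (-1:ℝ)^((r+1)*j) = (-1:ℝ)^j * (-1:ℝ)^(r*(k+j)) := by
    rw [← pow_add, ← pow_add]; congr 1; ring
  rw [div_eq_mul_inv, div_eq_mul_inv]
  linear_combination ((Nat.fib (r+1) : ℝ) * (G ((r+1)*(k+j)) * G ((r+1)*(k+j+1)))⁻¹) * he

theorem stmt8 (G : ℕ → ℝ) (hG : ∀ i, G (i+2) = G (i+1) + G i)
    (n q p : ℕ) (hp : 0 < p) (hn : Even n) (hq : Even q)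
    (hGnz : ∀ k ∈ Icc 1 (n+q), G (p*k) ≠ 0) :
    (Nat.fib (p*q) : ℝ) * ∑ k ∈ Icc 1 n, (-1 : ℝ)^(k*(p-1)) / (G (p*k) * G (p*k + p*q)) =
    (Nat.fib (p*n) : ℝ) * ∑ k ∈ Icc 1 q, (-1 : ℝ)^(k*(p-1)) / (G (p*k) * G (p*k + p*n)) := by
  have hGnz' : ∀ k ∈ Icc 1 (q+n), G (p*k) ≠ 0 := by
    intro k hk; exact hGnz k (by rwa [Nat.add_comm q n] at hk)
  rw [side G hG p hp n q hGnz, side G hG p hp q n hGnz']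
  obtain ⟨m, hm⟩ := hn
  have hm' : n = 2*m := by omega
  subst hm'
  exact symmL q hq m (fun s => (-1:ℝ)^((p-1)*s) * (Nat.fib p : ℝ) / (G (p*s) * G (p*(s+1))))
end

section
/- If p, q, n, t are integers with p, q, n positive and pqn odd, then L_{pq} · ∑_{k=1}^{2n} (−1)^{k−1} G_{pk+pq+t} = L_{pn} · ∑_{k=1}^{2q} (−1)^{k−1} G_{pk+pn+t}. -/
open Finset

-- step-p recurrence for any Fibonacci-like sequence
private lemma stepAll9 (L G : ℤ → ℤ)
    (hL0 : L 0 = 2) (hL1 : L 1 = 1) (hL : ∀ m : ℤ, L (m+1) = L m + L (m-1))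
    (hG : ∀ m : ℤ, G (m+1) = G m + G (m-1)) :
    ∀ p : ℕ, ∀ x : ℤ, G (x + p) = L p * G x - (-1:ℤ)^p * G (x - p) := by
  have key : ∀ p : ℕ, (∀ x : ℤ, G (x + p) = L p * G x - (-1:ℤ)^p * G (x - p)) ∧
      (∀ x : ℤ, G (x + (p+1)) = L (p+1) * G x - (-1:ℤ)^(p+1) * G (x - (p+1))) := by
    intro p
    induction p with
    | zero =>
      constructor
      · intro x; push_cast; simp [hL0]; ring
      · intro x
        push_cast
        have := hG x
        simp [hL1]
        linarith [hG x]
    | succ k ih =>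
      obtain ⟨ih1, ih2⟩ := ih
      refine ⟨ih2, ?_⟩
      intro x
      have e1 := hG (x + k + 1)
      have e2 := hL ((k:ℤ) + 1)
      have e3 := hG (x - k - 1)
      have e4 := ih1 x
      have e5 := ih2 x
      push_cast at *
      ring_nf at e1 e2 e3 e4 e5 ⊢
      linear_combination e1 + e4 + e5 - G x * e2 - (-1:ℤ)^k * e3
  intro p
  exact (key p).1


private lemma prodform9 (V : ℤ) (a : ℕ → ℤ) (g : ℤ → ℤ)
    (ha0 : a 0 = 2) (ha1 : a 1 = V)
    (ha : ∀ k : ℕ, a (k+2) = V * a (k+1) + a k)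
    (hg : ∀ m : ℤ, g (m+1) = V * g m + g (m-1)) :
    ∀ n : ℕ, ∀ j : ℤ, a n * g (n + j) = g (2*n + j) + (-1:ℤ)^n * g j := by
  have key : ∀ n : ℕ, (∀ j : ℤ, a n * g (n + j) = g (2*n + j) + (-1:ℤ)^n * g j) ∧
      (∀ j : ℤ, a (n+1) * g ((n+1) + j) = g (2*(n+1) + j) + (-1:ℤ)^(n+1) * g j) := by
    intro n
    induction n with
    | zero =>
      constructor
      · intro j; push_cast; ring_nf; simp [ha0]; ring
      · intro j
        have e := hg (j+1)
        push_cast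
        ring_nf at e ⊢
        simp only [ha1]
        linear_combination -e
    | succ k ih =>
      obtain ⟨ih1, ih2⟩ := ih
      refine ⟨ih2, ?_⟩
      intro j
      have e1 := ih2 (j+1)
      have e2 := ih1 (j+2)
      have e3 := hg (j+1)
      have e4 := hg (2*(k:ℤ)+3+j)
      have e5 := ha k
      push_cast at *
      ring_nf at e1 e2 e3 e4 e5 ⊢
      linear_combination g (2+(k:ℤ)+j) * e5 + V * e1 + e2 - e4 + (-1:ℤ)^k * e3
  intro n
  exact (key n).1


private lemma keysum9 (V : ℤ) (a : ℕ → ℤ) (g : ℤ → ℤ)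
    (ha0 : a 0 = 2) (ha1 : a 1 = V)
    (ha : ∀ k : ℕ, a (k+2) = V * a (k+1) + a k)
    (hg : ∀ m : ℤ, g (m+1) = V * g m + g (m-1)) :
    ∀ m : ℕ, V * ∑ k ∈ Icc 1 (2*(2*m+1)), (-1:ℤ)^(k-1) * g k
      = a (2*m+1) * (g (2*m+1) - g (2*m+2)) := by
  intro m
  induction m with
  | zero =>
    rw [show Icc 1 (2*(2*0+1)) = {1, 2} from rfl, Finset.sum_pair (by norm_num)]
    norm_num [ha1]
    tauto
  | succ m ih =>
    have hs : ∑ k ∈ Icc 1 (2*(2*(m+1)+1)), (-1:ℤ)^(k-1) * g k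
        = (∑ k ∈ Icc 1 (2*(2*m+1)), (-1:ℤ)^(k-1) * g k)
          + g (4*m+3) - g (4*m+4) + g (4*m+5) - g (4*m+6) := by
      rw [show 2*(2*(m+1)+1) = 4*m+2+1+1+1+1 by ring,
        Finset.sum_Icc_succ_top (a := 1) (b := 4*m+2+1+1+1) (by omega),
        Finset.sum_Icc_succ_top (a := 1) (b := 4*m+2+1+1) (by omega),
        Finset.sum_Icc_succ_top (a := 1) (b := 4*m+2+1) (by omega),
        Finset.sum_Icc_succ_top (a := 1) (b := 4*m+2) (by omega)]
      simp only [Nat.add_sub_cancel]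
      rw [show ((-1:ℤ))^(4*m+2) = 1 from Even.neg_one_pow ⟨2*m+1, by ring⟩,
        show ((-1:ℤ))^(4*m+2+1) = -1 from Odd.neg_one_pow ⟨2*m+1, by ring⟩,
        show ((-1:ℤ))^(4*m+2+1+1) = 1 from Even.neg_one_pow ⟨2*m+2, by ring⟩,
        show ((-1:ℤ))^(4*m+2+1+1+1) = -1 from Odd.neg_one_pow ⟨2*m+2, by ring⟩,
        show 4*m+2 = 2*(2*m+1) by ring]
      push_cast
      have hc : ∑ x ∈ Icc 1 (2*(2*m+1)), g (x:ℤ) * (-1:ℤ)^(x-1)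
          = ∑ x ∈ Icc 1 (2*(2*m+1)), (-1:ℤ)^(x-1) * g (x:ℤ) :=
        Finset.sum_congr rfl (fun x _ => mul_comm _ _)
      ring_nf
    set S := ∑ k ∈ Icc 1 (2*(2*m+1)), (-1:ℤ)^(k-1) * g k with hS
    rw [hs]
    have sgn : ∀ r : ℕ, ((-1:ℤ))^(2*r+1) = -1 := fun r => Odd.neg_one_pow ⟨r, by ring⟩
    have p1 := prodform9 V a g ha0 ha1 ha hg (2*m+1) 0
    have p2 := prodform9 V a g ha0 ha1 ha hg (2*m+1) 1
    have p3 := prodform9 V a g ha0 ha1 ha hg (2*m+3) 0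
    have p4 := prodform9 V a g ha0 ha1 ha hg (2*m+3) 1
    rw [sgn m] at p1 p2
    rw [show 2*m+3 = 2*(m+1)+1 by ring] at p3 p4
    rw [sgn (m+1)] at p3 p4
    rw [show 2*(m+1)+1 = 2*m+3 by ring] at p3 p4
    have r1 := hg (4*(m:ℤ)+3)
    have r2 := hg (4*(m:ℤ)+4)
    have r3 := hg (4*(m:ℤ)+5)
    have r4 := hg (4*(m:ℤ)+6)
    push_cast at *
    ring_nf at p1 p2 p3 p4 r1 r2 r3 r4 ih ⊢
    linear_combination ih + p1 - p2 - p3 + p4 - r1 + r2 - r3 + r4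


private lemma posL9 (L : ℤ → ℤ) (hL0 : L 0 = 2) (hL1 : L 1 = 1)
    (hL : ∀ m : ℤ, L (m+1) = L m + L (m-1)) : ∀ n : ℕ, 0 < L n := by
  have h : ∀ n : ℕ, 0 < L n ∧ 0 < L (n+1) := by
    intro n
    induction n with
    | zero =>
      constructor
      · norm_num [hL0]
      · norm_num [hL1]
    | succ k ih =>
      obtain ⟨h1, h2⟩ := ih
      constructor
      · push_cast at h2 ⊢; exact h2
      · have e := hL ((k:ℤ)+1)
        push_cast at *
        rw [show (k:ℤ)+1-1 = (k:ℤ) by ring] at e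
        linarith
  exact fun n => (h n).1

theorem stmt9 (L G : ℤ → ℤ)
    (hL0 : L 0 = 2) (hL1 : L 1 = 1) (hL : ∀ m : ℤ, L (m+1) = L m + L (m-1))
    (hG : ∀ m : ℤ, G (m+1) = G m + G (m-1))
    (p q n : ℕ) (t : ℤ) (hp : 0 < p) (hq : 0 < q) (hn : 0 < n) (hodd : Odd (p*q*n)) :
    L (p*q) * ∑ k ∈ Icc 1 (2*n), (-1 : ℤ)^(k-1) * G ((p*k : ℤ) + p*q + t) =
    L (p*n) * ∑ k ∈ Icc 1 (2*q), (-1 : ℤ)^(k-1) * G ((p*k : ℤ) + p*n + t) := by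
  have hpqn : Odd p ∧ Odd q ∧ Odd n := by
    rw [Nat.odd_mul, Nat.odd_mul] at hodd
    exact ⟨hodd.1.1, hodd.1.2, hodd.2⟩
  obtain ⟨hop, hoq, hon⟩ := hpqn
  obtain ⟨m2, hm2⟩ := hoq
  obtain ⟨m1, hm1⟩ := hon
  subst hm1; subst hm2
  -- step-p recurrences
  have sp : ((-1:ℤ))^p = -1 := Odd.neg_one_pow hop
  have hGstep : ∀ x : ℤ, G (x + p) = L p * G x + G (x - p) := by
    intro x
    have h := stepAll9 L G hL0 hL1 hL hG p x
    rw [sp] at h; linarith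
  have hLstep : ∀ x : ℤ, L (x + p) = L p * L x + L (x - p) := by
    intro x
    have h := stepAll9 L L hL0 hL1 hL hL p x
    rw [sp] at h; linarith
  set V := L p with hV
  have hVpos : 0 < V := posL9 L hL0 hL1 hL p
  -- the step-p Lucas sequence
  set a : ℕ → ℤ := fun k => L ((p:ℤ) * k) with haDef
  have ha0 : a 0 = 2 := by show L ((p:ℤ)*(0:ℕ)) = 2; push_cast; rw [mul_zero, hL0]
  have ha1 : a 1 = V := by show L ((p:ℤ)*(1:ℕ)) = V; push_cast; rw [mul_one]
  have ha : ∀ k : ℕ, a (k+2) = V * a (k+1) + a k := by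
    intro k
    have h := hLstep ((p:ℤ)*k + p)
    rw [show ((p:ℤ)*k + p) + p = (p:ℤ)*((k:ℤ)+2) by ring,
      show ((p:ℤ)*k + p) - p = (p:ℤ)*(k:ℤ) by ring,
      show ((p:ℤ)*(k:ℤ) + p) = (p:ℤ)*((k:ℤ)+1) by ring] at h
    show L ((p:ℤ)*((k:ℕ)+2 : ℕ)) = V * L ((p:ℤ)*((k:ℕ)+1 : ℕ)) + L ((p:ℤ)*(k:ℕ))
    push_cast
    exact h
  -- step-p G sequences for each side
  set g1 : ℤ → ℤ := fun x => G ((p:ℤ)*x + (p:ℤ)*(2*(m2:ℤ)+1) + t) with hg1Def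
  set g2 : ℤ → ℤ := fun x => G ((p:ℤ)*x + (p:ℤ)*(2*(m1:ℤ)+1) + t) with hg2Def
  have hg1 : ∀ m : ℤ, g1 (m+1) = V * g1 m + g1 (m-1) := by
    intro m
    have h := hGstep ((p:ℤ)*m + (p:ℤ)*(2*(m2:ℤ)+1) + t)
    show G ((p:ℤ)*(m+1) + (p:ℤ)*(2*(m2:ℤ)+1) + t)
        = V * G ((p:ℤ)*m + (p:ℤ)*(2*(m2:ℤ)+1) + t)
        + G ((p:ℤ)*(m-1) + (p:ℤ)*(2*(m2:ℤ)+1) + t)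
    rw [show ((p:ℤ)*m + (p:ℤ)*(2*(m2:ℤ)+1) + t) + p = (p:ℤ)*(m+1) + (p:ℤ)*(2*(m2:ℤ)+1) + t by ring,
      show ((p:ℤ)*m + (p:ℤ)*(2*(m2:ℤ)+1) + t) - p = (p:ℤ)*(m-1) + (p:ℤ)*(2*(m2:ℤ)+1) + t by ring] at h
    exact h
  have hg2 : ∀ m : ℤ, g2 (m+1) = V * g2 m + g2 (m-1) := by
    intro m
    have h := hGstep ((p:ℤ)*m + (p:ℤ)*(2*(m1:ℤ)+1) + t)
    show G ((p:ℤ)*(m+1) + (p:ℤ)*(2*(m1:ℤ)+1) + t)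
        = V * G ((p:ℤ)*m + (p:ℤ)*(2*(m1:ℤ)+1) + t)
        + G ((p:ℤ)*(m-1) + (p:ℤ)*(2*(m1:ℤ)+1) + t)
    rw [show ((p:ℤ)*m + (p:ℤ)*(2*(m1:ℤ)+1) + t) + p = (p:ℤ)*(m+1) + (p:ℤ)*(2*(m1:ℤ)+1) + t by ring,
      show ((p:ℤ)*m + (p:ℤ)*(2*(m1:ℤ)+1) + t) - p = (p:ℤ)*(m-1) + (p:ℤ)*(2*(m1:ℤ)+1) + t by ring] at h
    exact h
  have K1 := keysum9 V a g1 ha0 ha1 ha hg1 m1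
  have K2 := keysum9 V a g2 ha0 ha1 ha hg2 m2
  -- cancel V
  apply mul_left_cancel₀ (show V ≠ 0 from hVpos.ne')
  simp only [hg1Def] at K1
  simp only [hg2Def] at K2
  simp only [haDef] at K1 K2
  push_cast at K1 K2 ⊢
  have hA : G ((p:ℤ)*(2*(m1:ℤ)+1) + (p:ℤ)*(2*(m2:ℤ)+1) + t)
      = G ((p:ℤ)*(2*(m2:ℤ)+1) + (p:ℤ)*(2*(m1:ℤ)+1) + t) := by apply congrArg; ring
  have hB : G ((p:ℤ)*(2*(m1:ℤ)+2) + (p:ℤ)*(2*(m2:ℤ)+1) + t)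
      = G ((p:ℤ)*(2*(m2:ℤ)+2) + (p:ℤ)*(2*(m1:ℤ)+1) + t) := by apply congrArg; ring
  rw [hA, hB] at K1
  linear_combination L ((p:ℤ)*(2*(m2:ℤ)+1)) * K1 - L ((p:ℤ)*(2*(m1:ℤ)+1)) * K2
end

section
/- If p, q, n, t are integers with p, q, n positive and pqn odd, then L_{pq} · ∑_{k=1}^{n} G_{2pk+pq+t} = L_{pn} · ∑_{k=1}^{q} G_{2pk+pn+t}. -/
open Finset
theorem stmt10 (L G : ℤ → ℤ)
    (hL0 : L 0 = 2) (hL1 : L 1 = 1) (hL : ∀ m : ℤ, L (m+1) = L m + L (m-1))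
    (hG : ∀ m : ℤ, G (m+1) = G m + G (m-1))
    (p q n : ℕ) (t : ℤ) (hp : 0 < p) (hq : 0 < q) (hn : 0 < n) (hodd : Odd (p*q*n)) :
    L (p*q) * ∑ k ∈ Icc 1 n, G ((2*p*k : ℤ) + p*q + t) =
    L (p*n) * ∑ k ∈ Icc 1 q, G ((2*p*k : ℤ) + p*n + t) := by
  have key : ∀ (m : ℕ) (x : ℤ), L m * G x = G (x + m) + (-1:ℤ)^m * G (x - m) := by
    intro m
    induction m using Nat.twoStepInduction with
    | zero => intro x; simp [hL0]; ring
    | one => intro x; have := hG x; push_cast; simp [hL1]; linarith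
    | more m ih1 ih2 =>
      intro x
      have hLs : L ((m+2:ℕ):ℤ) = L (((m+1:ℕ)):ℤ) + L ((m:ℕ):ℤ) := by
        rw [show (((m+2:ℕ)):ℤ) = ((m:ℤ)+1)+1 by push_cast; ring,
            show (((m+1:ℕ)):ℤ) = (m:ℤ)+1 by push_cast; ring]
        have := hL ((m:ℤ)+1); simpa using this
      have A1 : G (x + ((m+2:ℕ):ℤ)) = G (x + ((m+1:ℕ):ℤ)) + G (x + ((m:ℕ):ℤ)) := by
        have h := hG (x + (m:ℤ) + 1)
        rw [show x + ((m:ℕ):ℤ) = x + (m:ℤ) + 1 - 1 by ring,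
            show x + ((m+2:ℕ):ℤ) = x + (m:ℤ) + 1 + 1 by push_cast; ring,
            show x + ((m+1:ℕ):ℤ) = x + (m:ℤ) + 1 by push_cast; ring]
        exact h
      have A2 : G (x - ((m:ℕ):ℤ)) = G (x - ((m+1:ℕ):ℤ)) + G (x - ((m+2:ℕ):ℤ)) := by
        have h := hG (x - (m:ℤ) - 1)
        rw [show x - ((m:ℕ):ℤ) = x - (m:ℤ) - 1 + 1 by ring,
            show x - ((m+1:ℕ):ℤ) = x - (m:ℤ) - 1 by push_cast; ring,
            show x - ((m+2:ℕ):ℤ) = x - (m:ℤ) - 1 - 1 by push_cast; ring]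
        exact h
      rw [hLs]
      linear_combination ih1 x + ih2 x - A1 + (-1:ℤ)^m * A2
  obtain ⟨hpq_odd, hn_odd⟩ : Odd (p*q) ∧ Odd n := Nat.odd_mul.mp hodd
  obtain ⟨hp_odd, hq_odd⟩ := Nat.odd_mul.mp hpq_odd
  have hpn_odd : Odd (p*n) := Nat.odd_mul.mpr ⟨hp_odd, hn_odd⟩
  set f : ℕ → ℤ := fun k => G (2*(p:ℤ)*k + t) with hf
  have main : ∀ (a b : ℕ), Odd (p*b) →
      L ((p:ℤ)*b) * ∑ k ∈ Icc 1 a, G ((2*(p:ℤ)*k) + (p:ℤ)*b + t)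
      = (∑ k ∈ Ioc 0 (b+a), f k) - (∑ k ∈ Ioc 0 b, f k) - (∑ k ∈ Ioc 0 a, f k) := by
    intro a b hob
    have step : ∀ k ∈ Icc 1 a, L ((p:ℤ)*b) * G ((2*(p:ℤ)*k) + (p:ℤ)*b + t)
        = f (b+k) - f k := by
      intro k _
      have h := key (p*b) ((2*(p:ℤ)*k) + (p:ℤ)*b + t)
      rw [Odd.neg_one_pow hob] at h
      rw [show ((p*b:ℕ):ℤ) = (p:ℤ)*b from by push_cast; ring] at h
      have e1 : G ((2*(p:ℤ)*k) + (p:ℤ)*b + t + (p:ℤ)*b) = f (b+k) := by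
        simp only [hf]; congr 1; push_cast; ring
      have e2 : G ((2*(p:ℤ)*k) + (p:ℤ)*b + t - (p:ℤ)*b) = f k := by
        simp only [hf]; congr 1; push_cast; ring
      rw [h, e1, e2]; ring
    rw [Finset.mul_sum, Finset.sum_congr rfl step, Finset.sum_sub_distrib]
    have hsh : ∑ k ∈ Icc 1 a, f (b+k) = ∑ k ∈ Ioc b (b+a), f k := by
      rw [← Finset.Icc_add_one_left_eq_Ioc,
        ← Finset.map_add_left_Icc, Finset.sum_map]
      rfl
    have hcons : (∑ k ∈ Icc 1 b, f k) + (∑ k ∈ Ioc b (b+a), f k)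
        = ∑ k ∈ Ioc 0 (b+a), f k := by
      rw [show Icc 1 b = Ioc 0 b from Finset.Icc_add_one_left_eq_Ioc 0 b]
      exact Finset.sum_Ioc_consecutive f (Nat.zero_le b) (Nat.le_add_right b a)
    have e : Icc 1 a = Ioc 0 a := Finset.Icc_add_one_left_eq_Ioc 0 a
    have e2 : Icc 1 b = Ioc 0 b := Finset.Icc_add_one_left_eq_Ioc 0 b
    rw [hsh, e]
    rw [e2] at hcons
    linarith [hcons]
  have h1 := main n q hpq_odd
  have h2 := main q n hpn_odd
  rw [Nat.add_comm q n] at h1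
  push_cast at h1 h2 ⊢
  rw [h1, h2]
  ring
end

section
/- If p, q, n, t are integers with p, q, n positive and pqn odd, then F_{pq} · ∑_{k=1}^{n} (−1)^{k−1} G_{2pk+pq+t} = F_{pn} · ∑_{k=1}^{q} (−1)^{k−1} G_{2pk+pn+t}. -/
open Finset

lemma rec_zero {D : ℤ → ℤ} (hD : ∀ m : ℤ, D (m+1) = D m + D (m-1))
    (h0 : D 0 = 0) (h1 : D 1 = 0) : ∀ m : ℤ, D m = 0 := by
  have key : ∀ m : ℤ, D m = 0 ∧ D (m+1) = 0 := by
    intro m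
    induction m using Int.induction_on with
    | zero => exact ⟨h0, by simpa using h1⟩
    | succ i ih =>
        refine ⟨ih.2, ?_⟩
        have h := hD ((i:ℤ)+1)
        rw [show ((i:ℤ)+1-1) = (i:ℤ) by ring] at h
        rw [h, ih.1, ih.2]; ring
    | pred i ih =>
        have h := hD (-(i:ℤ))
        constructor
        · have : D (-(i:ℤ)-1) = D (-(i:ℤ)+1) - D (-(i:ℤ)) := by linarith [h]
          rw [this, ih.1, ih.2]; ring
        · rw [show (-(i:ℤ)-1+1) = -(i:ℤ) by ring]; exact ih.1
  exact fun m => (key m).1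

lemma fib_add {F : ℤ → ℤ} (hF0 : F 0 = 0) (hF1 : F 1 = 1)
    (hF : ∀ m : ℤ, F (m+1) = F m + F (m-1)) (m n : ℤ) :
    F (m+n) = F m * F (n+1) + F (m-1) * F n := by
  have hF2 : F 2 = 1 := by
    have := hF 1; norm_num [hF0] at this; rw [this, hF1]
  have := rec_zero (D := fun n => F (m+n) - (F m * F (n+1) + F (m-1) * F n))
    ?_ ?_ ?_ n
  · linarith [this]
  · intro k
    have a1 : m + (k+1) = (m+k) + 1 := by ring
    have a2 : m + (k-1) = (m+k) - 1 := by ring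
    rw [a1, a2, show k-1+1 = k by ring]
    have h2 : F (k+1+1) = F (k+1) + F k := by
      have := hF (k+1); rwa [show k+1-1 = k by ring] at this
    rw [h2, hF k]
    linear_combination hF (m+k)
  · simp only [add_zero, zero_add, hF0, hF1]; ring
  · have : (1:ℤ)+1 = 2 := by norm_num
    rw [this, hF2, hF1, hF m]; ring

lemma cas_nat {F : ℤ → ℤ} (hF0 : F 0 = 0) (hF1 : F 1 = 1)
    (hF : ∀ m : ℤ, F (m+1) = F m + F (m-1)) (k : ℕ) :
    F ((k:ℤ)+1) * F ((k:ℤ)-1) - F (k:ℤ)^2 = (-1:ℤ)^k := by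
  induction k with
  | zero =>
      have hFm1 : F (-1:ℤ) = 1 := by
        have := hF 0; norm_num [hF0, hF1] at this; linarith
      norm_num [hF0, hF1, hFm1]
  | succ k ih =>
      push_cast
      have e1 : ((k:ℤ)+1)+1 = (k:ℤ)+2 := by ring
      have e2 : ((k:ℤ)+1)-1 = (k:ℤ) := by ring
      rw [e1, e2]
      have h1 : F ((k:ℤ)+2) = F ((k:ℤ)+1) + F (k:ℤ) := by
        have := hF ((k:ℤ)+1); rwa [show (k:ℤ)+1-1 = (k:ℤ) by ring] at this
      have h2 : F ((k:ℤ)+1) = F (k:ℤ) + F ((k:ℤ)-1) := hF k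
      rw [pow_succ]
      linear_combination h1 * F (k:ℤ) - F ((k:ℤ)+1) * h2 - ih

lemma sub_odd {F : ℤ → ℤ} (hF0 : F 0 = 0) (hF1 : F 1 = 1)
    (hF : ∀ m : ℤ, F (m+1) = F m + F (m-1)) (p : ℤ)
    (hCp : F (p+1) * F (p-1) - F p ^ 2 = -1) (m : ℤ) :
    F (m - p) = F (m-1) * F p - F m * F (p-1) := by
  have A : F m = F (m-p) * F (p+1) + F (m-p-1) * F p := by
    have := fib_add hF0 hF1 hF (m-p) p
    rwa [show (m-p)+p = m by ring, show (m-p)-1 = m-p-1 by ring] at this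
  have B : F (m-1) = F (m-p) * F p + F (m-p-1) * F (p-1) := by
    have := fib_add hF0 hF1 hF (m-p) (p-1)
    rwa [show (m-p)+(p-1) = m-1 by ring, show (p-1)+1 = p by ring,
      show (m-p)-1 = m-p-1 by ring] at this
  linear_combination F (p-1) * A - F p * B + F (m-p) * hCp

lemma v1 {F : ℤ → ℤ} (hF0 : F 0 = 0) (hF1 : F 1 = 1)
    (hF : ∀ m : ℤ, F (m+1) = F m + F (m-1)) (p : ℤ)
    (hCp : F (p+1) * F (p-1) - F p ^ 2 = -1) (m : ℤ) :
    F p * F (m+p) - F p * F (m-p) = F (2*p) * F m := by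
  have h1 := fib_add hF0 hF1 hF m p
  have h2 := sub_odd hF0 hF1 hF p hCp m
  have h3 := fib_add hF0 hF1 hF p p
  rw [show p+p = 2*p by ring] at h3
  rw [h1, h2, h3]; ring

lemma v2 {F : ℤ → ℤ} (hF0 : F 0 = 0) (hF1 : F 1 = 1)
    (hF : ∀ m : ℤ, F (m+1) = F m + F (m-1)) (d : ℤ)
    (hCd : F (d+1) * F (d-1) - F d ^ 2 = 1) (x y : ℤ) :
    F (x+d) * F (y+d) - F x * F y = F d * F (x+y+d) := by
  have A3 : F (x+y+d) = F x * F (y+d+1) + F (x-1) * F (y+d) := by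
    have := fib_add hF0 hF1 hF x (y+d)
    rwa [show x+(y+d) = x+y+d by ring, show (y+d)+1 = y+d+1 by ring] at this
  have A4 : F (y+d+1) = F (y+1) * F (d+1) + F y * F d := by
    have := fib_add hF0 hF1 hF (y+1) d
    rwa [show (y+1)+d = y+d+1 by ring, show (y+1)-1 = y by ring] at this
  have A1 := fib_add hF0 hF1 hF x d
  have A2 := fib_add hF0 hF1 hF y d
  have hd' : F (d-1) = F (d+1) - F d := by linarith [hF d]
  rw [hd'] at hCd
  rw [A3, A4, A1, A2, hF y]
  linear_combination F x * F y * hCd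

lemma keyF {F : ℤ → ℤ} (hF0 : F 0 = 0) (hF1 : F 1 = 1)
    (hF : ∀ m : ℤ, F (m+1) = F m + F (m-1)) (P : ℤ)
    (hCP : F (P+1) * F (P-1) - F P ^ 2 = -1)
    (hC2P : F (2*P+1) * F (2*P-1) - F (2*P) ^ 2 = 1)
    (j : ℕ) (c : ℤ) :
    F P * ∑ k ∈ Icc 1 (2*j+1), (-1:ℤ)^(k-1) * F (2*P*k + c) =
      F (P*(2*(j:ℤ)+1)) * F (P*(2*(j:ℤ)+1) + P + c) := by
  induction j with
  | zero =>
      rw [show (2*0+1 : ℕ) = 1 from rfl, Icc_self, sum_singleton]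
      push_cast
      rw [one_mul, mul_one, mul_one, show 2*P+c = P+P+c by ring]
  | succ j ih =>
      have hN : 2*(j+1)+1 = (2*j+1) + 1 + 1 := by ring
      rw [hN, Finset.sum_Icc_succ_top (by omega), Finset.sum_Icc_succ_top (by omega)]
      have s1 : ((-1:ℤ))^((2*j+1)+1-1) = -1 := by
        simp [pow_succ]
      have s2 : ((-1:ℤ))^((2*j+1)+1+1-1) = 1 := by
        simp [pow_succ]
      rw [s1, s2]
      set a : ℤ := P*(2*(j:ℤ)+1) with ha
      have h1 := v1 hF0 hF1 hF P hCP (2*a+3*P+c)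
      rw [show 2*a+3*P+c+P = 2*a+4*P+c by ring,
        show 2*a+3*P+c-P = 2*a+2*P+c by ring] at h1
      have h2 := v2 hF0 hF1 hF (2*P) hC2P a (a+P+c)
      rw [show a+P+c+2*P = a+3*P+c by ring,
        show a+(a+P+c)+2*P = 2*a+3*P+c by ring] at h2
      have e1 : 2*P*((2*j+1+1 : ℕ) : ℤ) + c = 2*a+2*P+c := by
        rw [ha]; push_cast; ring
      have e2 : 2*P*((2*j+1+1+1 : ℕ) : ℤ) + c = 2*a+4*P+c := by
        rw [ha]; push_cast; ring
      have e3 : P*(2*((j+1:ℕ):ℤ)+1) = a + 2*P := by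
        rw [ha]; push_cast; ring
      rw [e1, e2, e3, show a+2*P+P+c = a+3*P+c by ring]
      linear_combination ih + h1 - h2

lemma gen_decomp {F G : ℤ → ℤ} (hF0 : F 0 = 0) (hF1 : F 1 = 1)
    (hF : ∀ m : ℤ, F (m+1) = F m + F (m-1))
    (hG : ∀ m : ℤ, G (m+1) = G m + G (m-1)) (m : ℤ) :
    G m = G 0 * F (m-1) + G 1 * F m := by
  have hFm1 : F (-1:ℤ) = 1 := by
    have := hF 0; norm_num [hF0, hF1] at this; linarith
  have := rec_zero (D := fun m => G m - (G 0 * F (m-1) + G 1 * F m)) ?_ ?_ ?_ m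
  · linarith [this]
  · intro k
    have h' : F k = F (k-1) + F (k-1-1) := by
      have := hF (k-1); rwa [show k-1+1 = k by ring] at this
    rw [show k+1-1 = k by ring]
    linear_combination hG k - G 0 * h' - G 1 * (hF k)
  · norm_num [hF0, hFm1]
  · norm_num [hF0, hF1]

lemma keyG {F G : ℤ → ℤ} (hF0 : F 0 = 0) (hF1 : F 1 = 1)
    (hF : ∀ m : ℤ, F (m+1) = F m + F (m-1))
    (hG : ∀ m : ℤ, G (m+1) = G m + G (m-1)) (P : ℤ)
    (hCP : F (P+1) * F (P-1) - F P ^ 2 = -1)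
    (hC2P : F (2*P+1) * F (2*P-1) - F (2*P) ^ 2 = 1)
    (j : ℕ) (c : ℤ) :
    F P * ∑ k ∈ Icc 1 (2*j+1), (-1:ℤ)^(k-1) * G (2*P*k + c) =
      F (P*(2*(j:ℤ)+1)) * G (P*(2*(j:ℤ)+1) + P + c) := by
  have hterm : ∀ k ∈ Icc 1 (2*j+1), (-1:ℤ)^(k-1) * G (2*P*k + c) =
      G 0 * ((-1:ℤ)^(k-1) * F (2*P*k + (c-1))) + G 1 * ((-1:ℤ)^(k-1) * F (2*P*k + c)) := by
    intro k _
    rw [gen_decomp hF0 hF1 hF hG (2*P*k + c),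
      show 2*P*(k:ℤ)+c-1 = 2*P*k+(c-1) by ring]
    ring
  rw [Finset.sum_congr rfl hterm, Finset.sum_add_distrib, ← Finset.mul_sum,
    ← Finset.mul_sum]
  have k1 := keyF hF0 hF1 hF P hCP hC2P j (c-1)
  have k2 := keyF hF0 hF1 hF P hCP hC2P j c
  rw [gen_decomp hF0 hF1 hF hG (P*(2*(j:ℤ)+1) + P + c),
    show P*(2*(j:ℤ)+1)+P+c-1 = P*(2*(j:ℤ)+1)+P+(c-1) by ring]
  linear_combination G 0 * k1 + G 1 * k2

lemma fib_pos {F : ℤ → ℤ} (hF0 : F 0 = 0) (hF1 : F 1 = 1)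
    (hF : ∀ m : ℤ, F (m+1) = F m + F (m-1)) :
    ∀ k : ℕ, 0 ≤ F (k:ℤ) ∧ 0 < F ((k:ℤ)+1) := by
  intro k
  induction k with
  | zero => norm_num [hF0, hF1]
  | succ k ih =>
      have h := hF ((k:ℤ)+1)
      rw [show (k:ℤ)+1-1 = (k:ℤ) by ring] at h
      constructor
      · push_cast; linarith [ih.2]
      · push_cast; rw [h]; linarith [ih.1, ih.2]

theorem stmt11 (F G : ℤ → ℤ)
    (hF0 : F 0 = 0) (hF1 : F 1 = 1) (hF : ∀ m : ℤ, F (m+1) = F m + F (m-1))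
    (hG : ∀ m : ℤ, G (m+1) = G m + G (m-1))
    (p q n : ℕ) (t : ℤ) (hp : 0 < p) (hq : 0 < q) (hn : 0 < n) (hodd : Odd (p*q*n)) :
    F (p*q) * ∑ k ∈ Icc 1 n, (-1 : ℤ)^(k-1) * G ((2*p*k : ℤ) + p*q + t) =
    F (p*n) * ∑ k ∈ Icc 1 q, (-1 : ℤ)^(k-1) * G ((2*p*k : ℤ) + p*n + t) := by
  have hmul := Nat.odd_mul.mp hodd
  have hop : Odd p := (Nat.odd_mul.mp hmul.1).1
  have hoq : Odd q := (Nat.odd_mul.mp hmul.1).2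
  have hon : Odd n := hmul.2
  obtain ⟨jq, hjq⟩ := hoq
  obtain ⟨jn, hjn⟩ := hon
  have hq' : q = 2*jq+1 := by omega
  have hn' : n = 2*jn+1 := by omega
  subst hq' hn'
  have hCP : F ((p:ℤ)+1) * F ((p:ℤ)-1) - F (p:ℤ)^2 = -1 := by
    have := cas_nat hF0 hF1 hF p
    rwa [Odd.neg_one_pow hop] at this
  have hC2P : F (2*(p:ℤ)+1) * F (2*(p:ℤ)-1) - F (2*(p:ℤ))^2 = 1 := by
    have h := cas_nat hF0 hF1 hF (2*p)
    rw [Even.neg_one_pow ⟨p, by ring⟩] at h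
    push_cast at h
    convert h using 4
  have hFp : (0:ℤ) < F (p:ℤ) := by
    obtain ⟨p', rfl⟩ : ∃ p', p = p'+1 := ⟨p-1, by omega⟩
    have := (fib_pos hF0 hF1 hF p').2
    push_cast
    exact this
  have e1 : ∀ k : ℕ, 2*(p:ℤ)*(k:ℤ) + (p:ℤ)*((2*jq+1 : ℕ):ℤ) + t
      = 2*(p:ℤ)*(k:ℤ) + ((p:ℤ)*((2*jq+1 : ℕ):ℤ) + t) := fun k => by ring
  have e2 : ∀ k : ℕ, 2*(p:ℤ)*(k:ℤ) + (p:ℤ)*((2*jn+1 : ℕ):ℤ) + t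
      = 2*(p:ℤ)*(k:ℤ) + ((p:ℤ)*((2*jn+1 : ℕ):ℤ) + t) := fun k => by ring
  simp only [e1, e2]
  have K1 := keyG hF0 hF1 hF hG (p:ℤ) hCP hC2P jn ((p:ℤ)*((2*jq+1 : ℕ):ℤ) + t)
  have K2 := keyG hF0 hF1 hF hG (p:ℤ) hCP hC2P jq ((p:ℤ)*((2*jn+1 : ℕ):ℤ) + t)
  apply mul_left_cancel₀ (ne_of_gt hFp)
  calc F (p:ℤ) * (F ((p:ℤ)*((2*jq+1:ℕ):ℤ)) *
        ∑ k ∈ Icc 1 (2*jn+1), (-1:ℤ)^(k-1) * G (2*(p:ℤ)*(k:ℤ) + ((p:ℤ)*((2*jq+1 : ℕ):ℤ) + t)))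
      = F ((p:ℤ)*((2*jq+1:ℕ):ℤ)) * (F (p:ℤ) *
        ∑ k ∈ Icc 1 (2*jn+1), (-1:ℤ)^(k-1) * G (2*(p:ℤ)*(k:ℤ) + ((p:ℤ)*((2*jq+1 : ℕ):ℤ) + t))) := by
        ring
    _ = F ((p:ℤ)*((2*jq+1:ℕ):ℤ)) * (F ((p:ℤ)*(2*(jn:ℤ)+1)) *
        G ((p:ℤ)*(2*(jn:ℤ)+1) + (p:ℤ) + ((p:ℤ)*((2*jq+1 : ℕ):ℤ) + t))) := by rw [K1]
    _ = F ((p:ℤ)*((2*jn+1:ℕ):ℤ)) * (F ((p:ℤ)*(2*(jq:ℤ)+1)) *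
        G ((p:ℤ)*(2*(jq:ℤ)+1) + (p:ℤ) + ((p:ℤ)*((2*jn+1 : ℕ):ℤ) + t))) := by
        push_cast
        ring_nf
    _ = F ((p:ℤ)*((2*jn+1:ℕ):ℤ)) * (F (p:ℤ) *
        ∑ k ∈ Icc 1 (2*jq+1), (-1:ℤ)^(k-1) * G (2*(p:ℤ)*(k:ℤ) + ((p:ℤ)*((2*jn+1 : ℕ):ℤ) + t))) := by
        rw [K2]
    _ = F (p:ℤ) * (F ((p:ℤ)*((2*jn+1:ℕ):ℤ)) *
        ∑ k ∈ Icc 1 (2*jq+1), (-1:ℤ)^(k-1) * G (2*(p:ℤ)*(k:ℤ) + ((p:ℤ)*((2*jn+1 : ℕ):ℤ) + t))) := by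
        ring
end

section
/- If p, q, n, t are integers with p, q, n positive, and q and n are both even, then F_{pq} · ∑_{k=1}^{n} (−1)^{k−1} G_{2pk+pq+t} = F_{pn} · ∑_{k=1}^{q} (−1)^{k−1} G_{2pk+pn+t}. -/
open Finset Real

lemma fibLike_unique (f g : ℤ → ℝ) (hf : ∀ m, f (m+1) = f m + f (m-1))
    (hg : ∀ m, g (m+1) = g m + g (m-1)) (h0 : f 0 = g 0) (h1 : f 1 = g 1) :
    ∀ m, f m = g m := by
  have key : ∀ m : ℤ, f m = g m ∧ f (m+1) = g (m+1) := by
    intro m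
    induction m using Int.induction_on with
    | zero => exact ⟨h0, h1⟩
    | succ k ih =>
        refine ⟨ih.2, ?_⟩
        have e1 := hf (k+1); have e2 := hg (k+1)
        simp only [add_sub_cancel_right] at e1 e2
        rw [e1, e2, ih.1, ih.2]
    | pred k ih =>
        constructor
        · have e1 := hf (-k); have e2 := hg (-k)
          have d1 : f (-(k:ℤ)-1) = f (-(k:ℤ)+1) - f (-k) := by rw [e1]; ring
          have d2 : g (-(k:ℤ)-1) = g (-(k:ℤ)+1) - g (-k) := by rw [e2]; ring
          rw [d1, d2, ih.1, ih.2]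
        · have hk : -(k:ℤ)-1+1 = -(k:ℤ) := by ring
          rw [hk]; exact ih.1
  exact fun m => (key m).1

lemma zpow_fibrec (u : ℝ) (hu : u ≠ 0) (h : u^2 = u + 1) (m : ℤ) :
    u^(m+1) = u^m + u^(m-1) := by
  have h1 : u^(m+1) = u^(m-1) * (u*u) := by
    rw [show m+1 = (m-1)+2 by ring, zpow_add₀ hu, zpow_two]
  have h2 : (u:ℝ)^m = u^(m-1) * u := by
    rw [← zpow_add_one₀ hu]; ring_nf
  rw [h1, h2]; linear_combination u^(m-1) * h

lemma sum_eval (u : ℝ) (hu : u ≠ 0) (p n : ℕ) (hn : Even n) (c : ℤ) :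
    (1 + u^(2*p)) * ∑ k ∈ Icc 1 n, (-1:ℝ)^(k-1) * u^(2*(p:ℤ)*k + c) =
    u^c * u^(2*p) * (1 - (u^(2*p))^n) := by
  have hterm : ∀ i : ℕ, (-1:ℝ)^((1+i)-1) * u^(2*(p:ℤ)*(1+i) + c) =
      (u^c * u^(2*p)) * (-(u^(2*p)))^i := by
    intro i
    have he : 2*(p:ℤ)*(1+i) + c = c + ((2*p : ℕ) : ℤ) + ((2*p*i : ℕ) : ℤ) := by
      push_cast; ring
    rw [he, zpow_add₀ hu, zpow_add₀ hu, zpow_natCast, zpow_natCast,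
      show (1+i)-1 = i by omega, neg_pow, pow_mul]
    ring
  rw [show Icc 1 n = Ico 1 (n+1) by rw [Finset.Ico_add_one_right_eq_Icc], Finset.sum_Ico_eq_sum_range]
  simp only [Nat.add_sub_cancel]
  push_cast
  rw [Finset.sum_congr rfl (fun i _ => hterm i), ← Finset.mul_sum]
  have hg := geom_sum_mul (-(u^(2*p))) n
  have hne : (-(u^(2*p)))^n = (u^(2*p))^n := hn.neg_pow _
  rw [hne] at hg
  linear_combination (-(u^c * u^(2*p))) * hg

section
variable (x y : ℝ)

lemma binetF (hx0 : x ≠ 0) (hy0 : y ≠ 0) (hsub : x - y = Real.sqrt 5) (hxsq : x^2 = x+1) (hysq : y^2 = y+1)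
    (F : ℤ → ℤ) (hF0 : F 0 = 0) (hF1 : F 1 = 1)
    (hF : ∀ m : ℤ, F (m+1) = F m + F (m-1)) (m : ℤ) :
    Real.sqrt 5 * F m = x^m - y^m := by
  refine fibLike_unique (fun m => Real.sqrt 5 * F m)
    (fun m => x^m - y^m) ?_ ?_ ?_ ?_ m
  · intro m; have := hF m; push_cast [this]; ring
  · intro m
    rw [zpow_fibrec _ hx0 hxsq, zpow_fibrec _ hy0 hysq]
    ring
  · simp [hF0]
  · simp only [hF1, Int.cast_one, mul_one, zpow_one]
    exact hsub.symm

lemma binetG (hx0 : x ≠ 0) (hy0 : y ≠ 0) (hsub : x - y = Real.sqrt 5) (hmul : x * y = -1)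
    (hxsq : x^2 = x+1) (hysq : y^2 = y+1)
    (G : ℤ → ℤ) (hG : ∀ m : ℤ, G (m+1) = G m + G (m-1)) (m : ℤ) :
    Real.sqrt 5 * G m = ((G 1 : ℝ) + G 0 * x⁻¹) * x^m
      - ((G 1 : ℝ) + G 0 * y⁻¹) * y^m := by
  have hinv : x⁻¹ - y⁻¹ = Real.sqrt 5 := by
    rw [inv_sub_inv hx0 hy0, hmul,
      show y - x = -(x - y) by ring, hsub]
    norm_num
  refine fibLike_unique (fun m => Real.sqrt 5 * G m)
    (fun m => ((G 1 : ℝ) + G 0 * x⁻¹) * x^m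
      - ((G 1 : ℝ) + G 0 * y⁻¹) * y^m) ?_ ?_ ?_ ?_ m
  · intro m; have := hG m; push_cast [this]; ring
  · intro m
    rw [zpow_fibrec _ hx0 hxsq, zpow_fibrec _ hy0 hysq]
    ring
  · simp only [zpow_zero, mul_one]
    linear_combination (-(G 0 : ℝ)) * hinv
  · simp only [zpow_one]
    linear_combination (-(G 1 : ℝ)) * hsub - (G 0 : ℝ) * inv_mul_cancel₀ hx0
      + (G 0 : ℝ) * inv_mul_cancel₀ hy0

end

lemma keylem (s u v a b A B : ℝ) (hs : s ≠ 0) (hu : u ≠ 0) (hv : v ≠ 0) :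
    (u - u⁻¹) * (A * (1+s⁻¹) * (u*a*s*(1-v^2)) - B * (1+s) * (u⁻¹*b*s⁻¹*(1-(v⁻¹)^2))) =
    (v - v⁻¹) * (A * (1+s⁻¹) * (v*a*s*(1-u^2)) - B * (1+s) * (v⁻¹*b*s⁻¹*(1-(u⁻¹)^2))) := by
  field_simp
  ring

lemma main_real (x y : ℝ) (hx0 : x ≠ 0) (hy0 : y ≠ 0) (hmul : x * y = -1)
    (hsub : x - y = Real.sqrt 5) (hxsq : x^2 = x+1) (hysq : y^2 = y+1)
    (hxpos : 0 < x)
    (F G : ℤ → ℤ) (hF0 : F 0 = 0) (hF1 : F 1 = 1)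
    (hF : ∀ m : ℤ, F (m+1) = F m + F (m-1)) (hG : ∀ m : ℤ, G (m+1) = G m + G (m-1))
    (p q n : ℕ) (t : ℤ) (hqe : Even q) (hne : Even n) :
    (F ((p*q : ℕ) : ℤ) : ℝ) * ∑ k ∈ Icc 1 n, (-1:ℝ)^(k-1) * (G (2*(p:ℤ)*k + (((p*q:ℕ):ℤ) + t)) : ℝ)
    = (F ((p*n : ℕ) : ℤ) : ℝ) * ∑ k ∈ Icc 1 q, (-1:ℝ)^(k-1) * (G (2*(p:ℤ)*k + (((p*n:ℕ):ℤ) + t)) : ℝ) := by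
  have h5 : Real.sqrt 5 ^ 2 = 5 := Real.sq_sqrt (by norm_num)
  set A := (G 1 : ℝ) + G 0 * x⁻¹ with hA
  set B := (G 1 : ℝ) + G 0 * y⁻¹ with hB
  set s := x^(2*p) with hsdef
  set u := x^(p*q) with hudef
  set v := x^(p*n) with hvdef
  have hs0 : s ≠ 0 := pow_ne_zero _ hx0
  have hu0 : u ≠ 0 := pow_ne_zero _ hx0
  have hv0 : v ≠ 0 := pow_ne_zero _ hx0
  have hys : y^(2*p) = s⁻¹ := by
    apply eq_inv_of_mul_eq_one_right
    rw [hsdef, ← mul_pow, hmul, pow_mul]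
    norm_num
  have hyu : y^(p*q) = u⁻¹ := by
    apply eq_inv_of_mul_eq_one_right
    rw [hudef, ← mul_pow, hmul, (hqe.mul_left p).neg_one_pow]
  have hyv : y^(p*n) = v⁻¹ := by
    apply eq_inv_of_mul_eq_one_right
    rw [hvdef, ← mul_pow, hmul, (hne.mul_left p).neg_one_pow]
  have hsv : s^n = v^2 := by
    rw [hsdef, hvdef, ← pow_mul, ← pow_mul]
    congr 1; ring
  have hsu : s^q = u^2 := by
    rw [hsdef, hudef, ← pow_mul, ← pow_mul]
    congr 1; ring
  have hysv : (s⁻¹)^n = (v⁻¹)^2 := by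
    rw [← hys, ← hyv, ← pow_mul, ← pow_mul]
    congr 1; ring
  have hysu : (s⁻¹)^q = (u⁻¹)^2 := by
    rw [← hys, ← hyu, ← pow_mul, ← pow_mul]
    congr 1; ring
  -- Binet facts
  have hBF := binetF x y hx0 hy0 hsub hxsq hysq F hF0 hF1 hF
  have hBG := binetG x y hx0 hy0 hsub hmul hxsq hysq G hG
  have hFq : Real.sqrt 5 * (F ((p*q:ℕ):ℤ) : ℝ) = u - u⁻¹ := by
    rw [hBF, zpow_natCast, ← hyu, zpow_natCast]
  have hFn : Real.sqrt 5 * (F ((p*n:ℕ):ℤ) : ℝ) = v - v⁻¹ := by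
    rw [hBF, zpow_natCast, ← hyv, zpow_natCast]
  -- sum splitting
  have hGsum : ∀ (N : ℕ) (d : ℤ),
      Real.sqrt 5 * ∑ k ∈ Icc 1 N, (-1:ℝ)^(k-1) * (G (2*(p:ℤ)*k + d) : ℝ)
      = A * (∑ k ∈ Icc 1 N, (-1:ℝ)^(k-1) * x^(2*(p:ℤ)*k + d))
        - B * (∑ k ∈ Icc 1 N, (-1:ℝ)^(k-1) * y^(2*(p:ℤ)*k + d)) := by
    intro N d
    rw [Finset.mul_sum, Finset.mul_sum, Finset.mul_sum, ← Finset.sum_sub_distrib]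
    apply Finset.sum_congr rfl
    intro k _
    linear_combination ((-1:ℝ))^(k-1) * hBG (2*(p:ℤ)*k + d)
  -- sum evaluations
  have hxL : (1+s) * ∑ k ∈ Icc 1 n, (-1:ℝ)^(k-1) * x^(2*(p:ℤ)*k + (((p*q:ℕ):ℤ) + t))
      = (u * x^t) * s * (1 - v^2) := by
    rw [show (1+s) = (1 + x^(2*p)) from rfl, sum_eval x hx0 p n hne, zpow_add₀ hx0,
      zpow_natCast, ← hsdef, ← hudef, hsv]
  have hyL : (1+s⁻¹) * ∑ k ∈ Icc 1 n, (-1:ℝ)^(k-1) * y^(2*(p:ℤ)*k + (((p*q:ℕ):ℤ) + t))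
      = (u⁻¹ * y^t) * s⁻¹ * (1 - (v⁻¹)^2) := by
    rw [← hys, sum_eval y hy0 p n hne, zpow_add₀ hy0, zpow_natCast, hyu, hys, hysv]
  have hxR : (1+s) * ∑ k ∈ Icc 1 q, (-1:ℝ)^(k-1) * x^(2*(p:ℤ)*k + (((p*n:ℕ):ℤ) + t))
      = (v * x^t) * s * (1 - u^2) := by
    rw [show (1+s) = (1 + x^(2*p)) from rfl, sum_eval x hx0 p q hqe, zpow_add₀ hx0,
      zpow_natCast, ← hsdef, ← hvdef, hsu]
  have hyR : (1+s⁻¹) * ∑ k ∈ Icc 1 q, (-1:ℝ)^(k-1) * y^(2*(p:ℤ)*k + (((p*n:ℕ):ℤ) + t))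
      = (v⁻¹ * y^t) * s⁻¹ * (1 - (u⁻¹)^2) := by
    rw [← hys, sum_eval y hy0 p q hqe, zpow_add₀ hy0, zpow_natCast, hyv, hys, hysu]
  have hkey := keylem s u v (x^t) (y^t) A B hs0 hu0 hv0
  -- cancel the factor 5*(1+s)*(1+s⁻¹)
  have hspos : 0 < s := pow_pos hxpos _
  have hD : ((5:ℝ) * ((1+s) * (1+s⁻¹))) ≠ 0 := by
    have h1 : (0:ℝ) < 1 + s := by linarith
    have h2 : (0:ℝ) < 1 + s⁻¹ := by
      have := inv_pos.mpr hspos; linarith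
    positivity
  apply mul_left_cancel₀ hD
  linear_combination
    (-(F ((p*q:ℕ):ℤ) : ℝ) * (∑ k ∈ Icc 1 n, (-1:ℝ)^(k-1) * (G (2*(p:ℤ)*k + (((p*q:ℕ):ℤ) + t)) : ℝ)) * ((1+s)*(1+s⁻¹))
      + (F ((p*n:ℕ):ℤ) : ℝ) * (∑ k ∈ Icc 1 q, (-1:ℝ)^(k-1) * (G (2*(p:ℤ)*k + (((p*n:ℕ):ℤ) + t)) : ℝ)) * ((1+s)*(1+s⁻¹))) * h5
    + Real.sqrt 5 * (∑ k ∈ Icc 1 n, (-1:ℝ)^(k-1) * (G (2*(p:ℤ)*k + (((p*q:ℕ):ℤ) + t)) : ℝ)) * ((1+s)*(1+s⁻¹)) * hFq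
    - Real.sqrt 5 * (∑ k ∈ Icc 1 q, (-1:ℝ)^(k-1) * (G (2*(p:ℤ)*k + (((p*n:ℕ):ℤ) + t)) : ℝ)) * ((1+s)*(1+s⁻¹)) * hFn
    + (u - u⁻¹) * ((1+s)*(1+s⁻¹)) * hGsum n (((p*q:ℕ):ℤ) + t)
    - (v - v⁻¹) * ((1+s)*(1+s⁻¹)) * hGsum q (((p*n:ℕ):ℤ) + t)
    + A * (u - u⁻¹) * (1+s⁻¹) * hxL
    - B * (u - u⁻¹) * (1+s) * hyL
    - A * (v - v⁻¹) * (1+s⁻¹) * hxR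
    + B * (v - v⁻¹) * (1+s) * hyR
    + hkey
theorem stmt12 (F G : ℤ → ℤ)
    (hF0 : F 0 = 0) (hF1 : F 1 = 1) (hF : ∀ m : ℤ, F (m+1) = F m + F (m-1))
    (hG : ∀ m : ℤ, G (m+1) = G m + G (m-1))
    (p q n : ℕ) (t : ℤ) (hp : 0 < p) (hq : 0 < q) (hn : 0 < n)
    (hqe : Even q) (hne : Even n) :
    F (p*q) * ∑ k ∈ Icc 1 n, (-1 : ℤ)^(k-1) * G ((2*p*k : ℤ) + p*q + t) =
    F (p*n) * ∑ k ∈ Icc 1 q, (-1 : ℤ)^(k-1) * G ((2*p*k : ℤ) + p*n + t) := by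
  have main := main_real goldenRatio goldenConj goldenRatio_ne_zero goldenConj_ne_zero
    goldenRatio_mul_goldenConj goldenRatio_sub_goldenConj goldenRatio_sq goldenConj_sq goldenRatio_pos
    F G hF0 hF1 hF hG p q n t hqe hne
  have hL : ∀ k : ℕ, 2*(p:ℤ)*k + (((p*q:ℕ):ℤ) + t) = ((2*p*k : ℤ) + p*q + t) := by
    intro k; push_cast; ring
  have hR : ∀ k : ℕ, 2*(p:ℤ)*k + (((p*n:ℕ):ℤ) + t) = ((2*p*k : ℤ) + p*n + t) := by
    intro k; push_cast; ring
  have hq' : (((p*q:ℕ):ℤ)) = (p:ℤ)*q := by push_cast; ring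
  have hn' : (((p*n:ℕ):ℤ)) = (p:ℤ)*n := by push_cast; ring
  simp only [hL, hR] at main
  rw [hq', hn'] at main
  exact_mod_cast main
end

section
/- If p, q, n, t are integers with p, q, n positive and p even (or alternatively q and n both even), then F_{pq} · ∑_{k=1}^{n} G_{2pk+pq+t} = F_{pn} · ∑_{k=1}^{q} G_{2pk+pn+t}. -/
open Finset

private lemma addG (F G : ℤ → ℤ)
    (hF0 : F 0 = 0) (hF1 : F 1 = 1) (hF : ∀ m : ℤ, F (m+1) = F m + F (m-1))
    (hG : ∀ m : ℤ, G (m+1) = G m + G (m-1)) :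
    ∀ r m : ℤ, G (m + r) = F r * G (m+1) + F (r-1) * G m := by
  have hFneg1 : F (-1) = 1 := by
    have h := hF 0
    ring_nf at h
    rw [hF0, hF1] at h
    linarith
  intro r
  induction r using Int.induction_on with
  | zero => intro m; simp only [add_zero, zero_sub]; rw [hF0, hFneg1]; ring
  | succ k ih =>
      intro m
      linear_combination (norm := ring_nf) ih (m+1) + F k * hG (m+1) - G (m+1) * hF k
  | pred k ih =>
      intro m
      linear_combination (norm := ring_nf) ih (m-1) + G m * hF (-(k:ℤ)-1) - F (-(k:ℤ)-1) * hG m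

private lemma Fneg (F : ℤ → ℤ)
    (hF0 : F 0 = 0) (hF1 : F 1 = 1) (hF : ∀ m : ℤ, F (m+1) = F m + F (m-1)) :
    ∀ k : ℕ, F (-(k:ℤ)) = (-1)^(k+1) * F (k:ℤ) ∧ F (-(k:ℤ)-1) = (-1)^k * F ((k:ℤ)+1) := by
  have hFneg1 : F (-1) = 1 := by
    have h := hF 0
    ring_nf at h
    rw [hF0, hF1] at h
    linarith
  intro k
  induction k with
  | zero => simp [hF0, hFneg1, hF1]
  | succ k ih =>
      obtain ⟨ih1, ih2⟩ := ih
      constructor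
      · push_cast
        rw [show (-(k:ℤ)-1) = -((k:ℤ)+1) from by ring] at ih2
        rw [ih2]
        rw [pow_succ]
        ring
      · push_cast
        have h := hF (-(k:ℤ)-1)
        rw [show (-(k:ℤ)-1+1) = -(k:ℤ) from by ring, show (-(k:ℤ)-1-1) = -((k:ℤ)+1)-1 from by ring] at h
        have h2 := hF ((k:ℤ)+1)
        rw [show ((k:ℤ)+1-1) = (k:ℤ) from by ring] at h2
        rw [ih1, ih2] at h
        rw [show F (-((k:ℤ)+1)-1) = F (-(k:ℤ)) - F (-(k:ℤ)-1) from by rw [ih1, ih2]; linarith [h] ]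
        rw [ih1, ih2, h2]
        rw [pow_succ]
        ring

private lemma diffEven (F G : ℤ → ℤ)
    (hF0 : F 0 = 0) (hF1 : F 1 = 1) (hF : ∀ m : ℤ, F (m+1) = F m + F (m-1))
    (hG : ∀ m : ℤ, G (m+1) = G m + G (m-1))
    (r : ℕ) (hr : Even r) (m : ℤ) :
    G (m + r) - G (m - r) = F r * (G (m+1) + G (m-1)) := by
  have h1 := addG F G hF0 hF1 hF hG r m
  have h2 := addG F G hF0 hF1 hF hG (-(r:ℤ)) m
  obtain ⟨hn1, hn2⟩ := Fneg F hF0 hF1 hF r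
  rw [Odd.neg_one_pow hr.add_one] at hn1
  rw [Even.neg_one_pow hr] at hn2
  rw [hn1, hn2] at h2
  linear_combination (norm := ring_nf) h1 - h2 - G m * hF r + F (r:ℤ) * hG m

private lemma diffOdd (F G : ℤ → ℤ)
    (hF0 : F 0 = 0) (hF1 : F 1 = 1) (hF : ∀ m : ℤ, F (m+1) = F m + F (m-1))
    (hG : ∀ m : ℤ, G (m+1) = G m + G (m-1))
    (r : ℕ) (hr : Odd r) (m : ℤ) :
    G (m + r) - G (m - r) = (F ((r:ℤ)+1) + F ((r:ℤ)-1)) * G m := by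
  have h1 := addG F G hF0 hF1 hF hG r m
  have h2 := addG F G hF0 hF1 hF hG (-(r:ℤ)) m
  obtain ⟨hn1, hn2⟩ := Fneg F hF0 hF1 hF r
  rw [Even.neg_one_pow hr.add_one] at hn1
  rw [Odd.neg_one_pow hr] at hn2
  rw [hn1, hn2] at h2
  linear_combination (norm := ring_nf) h1 - h2

private lemma tele_s13 (X : ℤ → ℤ) (d a : ℤ) :
    ∀ n : ℕ, ∑ k ∈ Icc 1 n, (X (d*k + a) - X (d*k + a - d)) = X (d*n + a) - X a
  | 0 => by simp
  | (n+1) => by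
      rw [Finset.sum_Icc_succ_top (by omega : 1 ≤ n+1), tele_s13 X d a n]
      have e1 : d*((n:ℤ)+1) + a - d = d*n + a := by ring
      push_cast
      rw [e1]
      ring

private lemma sumEven (F G : ℤ → ℤ)
    (hF0 : F 0 = 0) (hF1 : F 1 = 1) (hF : ∀ m : ℤ, F (m+1) = F m + F (m-1))
    (hG : ∀ m : ℤ, G (m+1) = G m + G (m-1))
    (p : ℕ) (hp : Even p) (c : ℤ) (n : ℕ) :
    5 * F (p:ℤ) * ∑ k ∈ Icc 1 n, G (2*(p:ℤ)*k + c) =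
      5 * F ((p:ℤ)*n) * G ((p:ℤ)*n + p + c) := by
  set H : ℤ → ℤ := fun m => G (m+1) + G (m-1) with hHdef
  have hH : ∀ m : ℤ, H (m+1) = H m + H (m-1) := by
    intro m
    simp only [hHdef]
    linear_combination (norm := ring_nf) hG (m+1) + hG (m-1)
  have hHH : ∀ m : ℤ, H (m+1) + H (m-1) = 5 * G m := by
    intro m
    simp only [hHdef]
    linear_combination (norm := ring_nf) hG (m+1) + hG m - hG (m-1)
  have step : 5 * F (p:ℤ) * ∑ k ∈ Icc 1 n, G (2*(p:ℤ)*k + c) =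
      ∑ k ∈ Icc 1 n, (H (2*(p:ℤ)*k + (c+p)) - H (2*(p:ℤ)*k + (c+p) - 2*p)) := by
    rw [Finset.mul_sum]
    refine Finset.sum_congr rfl fun k _ => ?_
    have h1 := diffEven F H hF0 hF1 hF hH p hp (2*(p:ℤ)*k + c)
    have h2 := hHH (2*(p:ℤ)*k + c)
    linear_combination (norm := ring_nf) -h1 - F (p:ℤ) * h2
  rw [step, tele_s13 H (2*(p:ℤ)) (c+(p:ℤ)) n]
  have h3 := diffEven F H hF0 hF1 hF hH (p*n) (hp.mul_right n) ((p:ℤ)*n + p + c)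
  have h4 := hHH ((p:ℤ)*n + p + c)
  push_cast at h3
  linear_combination (norm := ring_nf) h3 + F ((p:ℤ)*n) * h4

private lemma sumOdd (F G : ℤ → ℤ)
    (hF0 : F 0 = 0) (hF1 : F 1 = 1) (hF : ∀ m : ℤ, F (m+1) = F m + F (m-1))
    (hG : ∀ m : ℤ, G (m+1) = G m + G (m-1))
    (p : ℕ) (hp : Odd p) (c : ℤ) (n : ℕ) (hn : Even n) :
    (F ((p:ℤ)+1) + F ((p:ℤ)-1)) * ∑ k ∈ Icc 1 n, G (2*(p:ℤ)*k + c) =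
      F ((p:ℤ)*n) * (G ((p:ℤ)*n + p + c + 1) + G ((p:ℤ)*n + p + c - 1)) := by
  have step : (F ((p:ℤ)+1) + F ((p:ℤ)-1)) * ∑ k ∈ Icc 1 n, G (2*(p:ℤ)*k + c) =
      ∑ k ∈ Icc 1 n, (G (2*(p:ℤ)*k + (c+p)) - G (2*(p:ℤ)*k + (c+p) - 2*p)) := by
    rw [Finset.mul_sum]
    refine Finset.sum_congr rfl fun k _ => ?_
    have h1 := diffOdd F G hF0 hF1 hF hG p hp (2*(p:ℤ)*k + c)
    linear_combination (norm := ring_nf) -h1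
  rw [step, tele_s13 G (2*(p:ℤ)) (c+(p:ℤ)) n]
  have h3 := diffEven F G hF0 hF1 hF hG (p*n) (hn.mul_left p) ((p:ℤ)*n + p + c)
  push_cast at h3
  linear_combination (norm := ring_nf) h3

private lemma Fpos (F : ℤ → ℤ)
    (hF0 : F 0 = 0) (hF1 : F 1 = 1) (hF : ∀ m : ℤ, F (m+1) = F m + F (m-1)) :
    ∀ k : ℕ, 0 ≤ F (k:ℤ) ∧ 1 ≤ F ((k:ℤ)+1) := by
  intro k
  induction k with
  | zero => simp [hF0, hF1]
  | succ k ih =>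
      obtain ⟨ih1, ih2⟩ := ih
      have h := hF ((k:ℤ)+1)
      rw [show ((k:ℤ)+1-1) = (k:ℤ) from by ring] at h
      constructor
      · push_cast; linarith
      · push_cast; linarith

theorem stmt13 (F G : ℤ → ℤ)
    (hF0 : F 0 = 0) (hF1 : F 1 = 1) (hF : ∀ m : ℤ, F (m+1) = F m + F (m-1))
    (hG : ∀ m : ℤ, G (m+1) = G m + G (m-1))
    (p q n : ℕ) (t : ℤ) (hp : 0 < p) (hq : 0 < q) (hn : 0 < n)
    (h : Even p ∨ (Even q ∧ Even n)) :
    F (p*q) * ∑ k ∈ Icc 1 n, G ((2*p*k : ℤ) + p*q + t) =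
    F (p*n) * ∑ k ∈ Icc 1 q, G ((2*p*k : ℤ) + p*n + t) := by
  have hFp : 1 ≤ F (p:ℤ) := by
    have := (Fpos F hF0 hF1 hF (p-1)).2
    rwa [show ((p-1:ℕ):ℤ)+1 = (p:ℤ) from by push_cast [Nat.cast_sub hp]; ring] at this
  have hs1 : ∑ k ∈ Icc 1 n, G ((2*p*k : ℤ) + p*q + t) =
      ∑ k ∈ Icc 1 n, G (2*(p:ℤ)*k + ((p:ℤ)*q + t)) := by
    refine Finset.sum_congr rfl fun k _ => ?_
    congr 1; push_cast; ring
  have hs2 : ∑ k ∈ Icc 1 q, G ((2*p*k : ℤ) + p*n + t) =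
      ∑ k ∈ Icc 1 q, G (2*(p:ℤ)*k + ((p:ℤ)*n + t)) := by
    refine Finset.sum_congr rfl fun k _ => ?_
    congr 1; push_cast; ring
  rw [hs1, hs2]
  rcases Nat.even_or_odd p with hpe | hpo
  · have key1 := sumEven F G hF0 hF1 hF hG p hpe ((p:ℤ)*q + t) n
    have key2 := sumEven F G hF0 hF1 hF hG p hpe ((p:ℤ)*n + t) q
    have h5 : (5 : ℤ) * F (p:ℤ) ≠ 0 := by positivity
    apply mul_left_cancel₀ h5
    calc 5 * F (p:ℤ) * (F ((p:ℤ)*q) * ∑ k ∈ Icc 1 n, G (2*(p:ℤ)*k + ((p:ℤ)*q + t)))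
        = F ((p:ℤ)*q) * (5 * F (p:ℤ) * ∑ k ∈ Icc 1 n, G (2*(p:ℤ)*k + ((p:ℤ)*q + t))) := by ring
      _ = F ((p:ℤ)*q) * (5 * F ((p:ℤ)*n) * G ((p:ℤ)*n + p + ((p:ℤ)*q + t))) := by rw [key1]
      _ = F ((p:ℤ)*n) * (5 * F ((p:ℤ)*q) * G ((p:ℤ)*q + p + ((p:ℤ)*n + t))) := by
            rw [show (p:ℤ)*n + p + ((p:ℤ)*q + t) = (p:ℤ)*q + p + ((p:ℤ)*n + t) from by ring]; ring
      _ = F ((p:ℤ)*n) * (5 * F (p:ℤ) * ∑ k ∈ Icc 1 q, G (2*(p:ℤ)*k + ((p:ℤ)*n + t))) := by rw [key2]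
      _ = 5 * F (p:ℤ) * (F ((p:ℤ)*n) * ∑ k ∈ Icc 1 q, G (2*(p:ℤ)*k + ((p:ℤ)*n + t))) := by ring
  · obtain ⟨hqe, hne⟩ : Even q ∧ Even n := by
      rcases h with hpe' | hh
      · exact absurd hpe' (Nat.not_even_iff_odd.mpr hpo)
      · exact hh
    have key1 := sumOdd F G hF0 hF1 hF hG p hpo ((p:ℤ)*q + t) n hne
    have key2 := sumOdd F G hF0 hF1 hF hG p hpo ((p:ℤ)*n + t) q hqe
    have hL1 : 1 ≤ F ((p:ℤ)+1) := by
      have := (Fpos F hF0 hF1 hF p).2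
      exact this
    have hL0 : 0 ≤ F ((p:ℤ)-1) := by
      have := (Fpos F hF0 hF1 hF (p-1)).1
      rwa [show ((p-1:ℕ):ℤ) = (p:ℤ)-1 from by push_cast [Nat.cast_sub hp]; ring] at this
    have hL : F ((p:ℤ)+1) + F ((p:ℤ)-1) ≠ 0 := by linarith
    apply mul_left_cancel₀ hL
    calc (F ((p:ℤ)+1) + F ((p:ℤ)-1)) * (F ((p:ℤ)*q) * ∑ k ∈ Icc 1 n, G (2*(p:ℤ)*k + ((p:ℤ)*q + t)))
        = F ((p:ℤ)*q) * ((F ((p:ℤ)+1) + F ((p:ℤ)-1)) * ∑ k ∈ Icc 1 n, G (2*(p:ℤ)*k + ((p:ℤ)*q + t))) := by ring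
      _ = F ((p:ℤ)*q) * (F ((p:ℤ)*n) * (G ((p:ℤ)*n + p + ((p:ℤ)*q + t) + 1) + G ((p:ℤ)*n + p + ((p:ℤ)*q + t) - 1))) := by rw [key1]
      _ = F ((p:ℤ)*n) * (F ((p:ℤ)*q) * (G ((p:ℤ)*q + p + ((p:ℤ)*n + t) + 1) + G ((p:ℤ)*q + p + ((p:ℤ)*n + t) - 1))) := by
            rw [show (p:ℤ)*n + p + ((p:ℤ)*q + t) + 1 = (p:ℤ)*q + p + ((p:ℤ)*n + t) + 1 from by ring,
               show (p:ℤ)*n + p + ((p:ℤ)*q + t) - 1 = (p:ℤ)*q + p + ((p:ℤ)*n + t) - 1 from by ring]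
            ring
      _ = F ((p:ℤ)*n) * ((F ((p:ℤ)+1) + F ((p:ℤ)-1)) * ∑ k ∈ Icc 1 q, G (2*(p:ℤ)*k + ((p:ℤ)*n + t))) := by rw [key2]
      _ = (F ((p:ℤ)+1) + F ((p:ℤ)-1)) * (F ((p:ℤ)*n) * ∑ k ∈ Icc 1 q, G (2*(p:ℤ)*k + ((p:ℤ)*n + t))) := by ring
end

section
/- If p, q, n, t are integers with p, q, n positive and p even, then F_{pq} · ∑_{k=1}^{2n} (−1)^{k−1} G_{pk+pq+t} = F_{pn} · ∑_{k=1}^{2q} (−1)^{k−1} G_{pk+pn+t}. -/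
open Finset

lemma add_formula (F G : ℤ → ℤ)
    (hF0 : F 0 = 0) (hFm1 : F (-1) = 1)
    (hF : ∀ m : ℤ, F (m+1) = F m + F (m-1))
    (hG : ∀ m : ℤ, G (m+1) = G m + G (m-1)) :
    ∀ a x : ℤ, G (x + a) = F a * G (x+1) + F (a-1) * G x := by
  intro a
  induction a using Int.induction_on with
  | zero => intro x; simp [hF0, hFm1]
  | succ i ih =>
      intro x
      have h := ih (x+1)
      have hg := hG (x+1)
      rw [show (x:ℤ)+1-1 = x from by ring] at hg
      have hf := hF (i:ℤ)
      rw [show x + ((i:ℤ)+1) = (x+1) + i from by ring,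
          show ((i:ℤ)+1) - 1 = i from by ring]
      linear_combination h + F (i:ℤ) * hg - G (x+1) * hf
  | pred i ih =>
      intro x
      have h := ih (x-1)
      have hg := hG x
      have hf := hF (-(i:ℤ)-1)
      rw [show (-(i:ℤ)-1)+1 = -(i:ℤ) from by ring] at hf
      rw [show x + (-(i:ℤ)-1) = (x-1) + (-(i:ℤ)) from by ring]
      rw [show (x:ℤ)-1+1 = x from by ring] at h
      linear_combination h - F (-(i:ℤ)-1) * hg + G x * hf

lemma cas_step (F : ℤ → ℤ) (hF : ∀ m : ℤ, F (m+1) = F m + F (m-1)) (m : ℤ) :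
    F (m+2) * F m - F (m+1) * F (m+1) + (F (m+1) * F (m-1) - F m * F m) = 0 := by
  have h1 := hF (m+1)
  rw [show (m:ℤ)+1+1 = m+2 from by ring, show (m:ℤ)+1-1 = m from by ring] at h1
  have h2 := hF m
  linear_combination F m * h1 - F (m+1) * h2

lemma cas_even (F : ℤ → ℤ) (hF0 : F 0 = 0) (hF1 : F 1 = 1) (hFm1 : F (-1) = 1)
    (hF : ∀ m : ℤ, F (m+1) = F m + F (m-1)) :
    ∀ j : ℤ, F (2*j+1) * F (2*j-1) - F (2*j) * F (2*j) = 1 := by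
  intro j
  induction j using Int.induction_on with
  | zero => norm_num [hF0, hF1, hFm1]
  | succ i ih =>
      have c1 := cas_step F hF (2*(i:ℤ))
      have c2 := cas_step F hF (2*(i:ℤ)+1)
      ring_nf at c1 c2 ih ⊢
      linarith [c1, c2, ih]
  | pred i ih =>
      have c1 := cas_step F hF (2*(-(i:ℤ)-1))
      have c2 := cas_step F hF (2*(-(i:ℤ)-1)+1)
      ring_nf at c1 c2 ih ⊢
      linarith [c1, c2, ih]

lemma step_lemma (F G : ℤ → ℤ)
    (hF0 : F 0 = 0) (hFm1 : F (-1) = 1)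
    (hF : ∀ m : ℤ, F (m+1) = F m + F (m-1))
    (hG : ∀ m : ℤ, G (m+1) = G m + G (m-1))
    (b : ℤ) (hcas : F (b+1) * F (b-1) - F b * F b = 1) (a x : ℤ) :
    F (a+b) * (G (x+b) - G (x+2*b)) =
      F a * (G x - G (x+b)) + F b * (G (x+(a+b)) - G (x+(a+2*b))) := by
  have addG := add_formula F G hF0 hFm1 hF hG
  have addF := add_formula F F hF0 hFm1 hF hF
  have hGb := addG b x
  have hG2b := addG (2*b) x
  have hGab := addG (a+b) x
  have hGa2b := addG (a+2*b) x
  have hFab := addF b a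
  have hFabm := addF b (a-1)
  rw [show a-1+b = a+b-1 from by ring, show a-1+1 = a from by ring] at hFabm
  have hF2b := addF b b
  rw [show b+b = 2*b from by ring] at hF2b
  have hF2bm := addF b (b-1)
  rw [show b-1+b = 2*b-1 from by ring, show b-1+1 = b from by ring] at hF2bm
  have hFa2b := addF (2*b) a
  have hFa2bm := addF (2*b) (a-1)
  rw [show a-1+2*b = a+2*b-1 from by ring, show a-1+1 = a from by ring] at hFa2bm
  rw [hGb, hG2b, hGab, hGa2b, hFab, hFabm, hFa2b, hFa2bm, hF2b, hF2bm]
  have hra := hF a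
  have hrb := hF b
  rw [hrb] at hcas
  rw [hra, hrb]
  linear_combination (F a * (G x * (1 - F (b-1)) - F b * G (x+1))) * hcas

lemma key_lemma (F G : ℤ → ℤ)
    (b : ℤ)
    (step : ∀ a x : ℤ, F (a+b) * (G (x+b) - G (x+2*b)) =
      F a * (G x - G (x+b)) + F b * (G (x+(a+b)) - G (x+(a+2*b))))
    (c : ℤ) :
    ∀ n : ℕ, F b * ∑ k ∈ Icc 1 (2*(n+1)), (-1:ℤ)^(k-1) * G (b*k + c) =
      F (b*(n+1)) * (G (b*(n+1) + c) - G (b*(n+1) + b + c)) := by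
  intro n
  induction n with
  | zero =>
      rw [show Finset.Icc (1:ℕ) (2*(0+1)) = {1,2} by decide,
          Finset.sum_insert (by decide), Finset.sum_singleton]
      simp only [show (1:ℕ)-1 = 0 from rfl, show (2:ℕ)-1 = 1 from rfl, pow_zero, pow_one]
      rw [show b*((((0:ℕ)):ℤ)+1) = b by norm_num,
          show b*(((1:ℕ)):ℤ)+c = b+c by norm_num,
          show b*(((2:ℕ)):ℤ)+c = b+b+c by push_cast; ring]
      ring
  | succ n ih =>
      rw [show 2*(n+1+1) = (2*(n+1)+1)+1 from by ring,
          Finset.sum_Icc_succ_top (by omega), Finset.sum_Icc_succ_top (by omega)]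
      have e1 : (-1:ℤ)^(2*(n+1)+1-1) = 1 := by simp [pow_mul]
      have e2 : (-1:ℤ)^(2*(n+1)+1+1-1) = -1 := by simp [pow_succ, pow_mul]
      rw [e1, e2]
      have hstep := step (b*((n:ℤ)+1)) (b*((n:ℤ)+1)+c)
      rw [show b*((n:ℤ)+1)+b+c = b*((n:ℤ)+1)+c+b from by ring] at ih
      rw [show b*(((2*(n+1)+1 : ℕ)):ℤ)+c = (b*((n:ℤ)+1)+c) + (b*((n:ℤ)+1)+b) by push_cast; ring,
          show b*(((2*(n+1)+1+1 : ℕ)):ℤ)+c = (b*((n:ℤ)+1)+c) + (b*((n:ℤ)+1)+2*b) by push_cast; ring,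
          show b*((((n+1:ℕ)):ℤ)+1)+c = b*((n:ℤ)+1)+c+b by push_cast; ring,
          show b*((((n+1:ℕ)):ℤ)+1)+b+c = b*((n:ℤ)+1)+c+2*b by push_cast; ring,
          show b*((((n+1:ℕ)):ℤ)+1) = b*((n:ℤ)+1)+b by push_cast; ring]
      linear_combination ih - hstep

theorem stmt14 (F G : ℤ → ℤ)
    (hF0 : F 0 = 0) (hF1 : F 1 = 1) (hF : ∀ m : ℤ, F (m+1) = F m + F (m-1))
    (hG : ∀ m : ℤ, G (m+1) = G m + G (m-1))
    (p q n : ℕ) (t : ℤ) (hp : 0 < p) (hq : 0 < q) (hn : 0 < n) (hpe : Even p) :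
    F (p*q) * ∑ k ∈ Icc 1 (2*n), (-1 : ℤ)^(k-1) * G ((p*k : ℤ) + p*q + t) =
    F (p*n) * ∑ k ∈ Icc 1 (2*q), (-1 : ℤ)^(k-1) * G ((p*k : ℤ) + p*n + t) := by
  have hFm1 : F (-1) = 1 := by
    have h := hF 0
    rw [show (0:ℤ)+1 = 1 from by ring, show (0:ℤ)-1 = -1 from by ring, hF0, hF1] at h
    linarith
  -- positivity
  have hpos : ∀ m : ℕ, 0 ≤ F (m:ℤ) ∧ 0 < F ((m:ℤ)+1) := by
    intro m
    induction m with
    | zero => simp [hF0, hF1]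
    | succ m ih =>
        have h := hF ((m:ℤ)+1)
        rw [show (m:ℤ)+1-1 = m from by ring] at h
        constructor
        · push_cast
          linarith [ih.1, ih.2]
        · push_cast
          linarith [ih.1, ih.2]
  have hFp : F (p:ℤ) ≠ 0 := by
    have h := (hpos (p-1)).2
    rw [show (((p-1:ℕ)):ℤ)+1 = (p:ℤ) by omega] at h
    exact ne_of_gt h
  -- cassini at p
  obtain ⟨r, hr⟩ := hpe
  have hr2 : (p:ℤ) = 2*(r:ℤ) := by push_cast [hr]; ring
  have hcas := cas_even F hF0 hF1 hFm1 hF (r:ℤ)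
  rw [← hr2] at hcas
  have hstep := step_lemma F G hF0 hFm1 hF hG (p:ℤ) hcas
  obtain ⟨n', rfl⟩ : ∃ m, n = m+1 := ⟨n-1, by omega⟩
  obtain ⟨q', rfl⟩ : ∃ m, q = m+1 := ⟨q-1, by omega⟩
  have key1 := key_lemma F G (p:ℤ) hstep ((p:ℤ)*((q':ℤ)+1)+t) n'
  have key2 := key_lemma F G (p:ℤ) hstep ((p:ℤ)*((n':ℤ)+1)+t) q'
  have hG1 : ∑ k ∈ Icc 1 (2*(n'+1)), (-1 : ℤ)^(k-1) * G ((p*k : ℤ) + p*(q'+1) + t)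
      = ∑ k ∈ Icc 1 (2*(n'+1)), (-1:ℤ)^(k-1) * G ((p:ℤ)*k + ((p:ℤ)*((q':ℤ)+1)+t)) := by
    apply Finset.sum_congr rfl
    intro k _
    congr 1
    push_cast
    ring
  have hG2 : ∑ k ∈ Icc 1 (2*(q'+1)), (-1 : ℤ)^(k-1) * G ((p*k : ℤ) + p*(n'+1) + t)
      = ∑ k ∈ Icc 1 (2*(q'+1)), (-1:ℤ)^(k-1) * G ((p:ℤ)*k + ((p:ℤ)*((n':ℤ)+1)+t)) := by
    apply Finset.sum_congr rfl
    intro k _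
    congr 1
    push_cast
    ring
  apply mul_left_cancel₀ hFp
  push_cast
  rw [hG1, hG2]
  conv_lhs => rw [mul_left_comm, key1]
  conv_rhs => rw [mul_left_comm, key2]
  rw [show (p:ℤ)*((n':ℤ)+1) + ((p:ℤ)*((q':ℤ)+1)+t) = (p:ℤ)*((q':ℤ)+1) + ((p:ℤ)*((n':ℤ)+1)+t) by ring,
      show (p:ℤ)*((n':ℤ)+1) + (p:ℤ) + ((p:ℤ)*((q':ℤ)+1)+t) = (p:ℤ)*((q':ℤ)+1) + (p:ℤ) + ((p:ℤ)*((n':ℤ)+1)+t) by ring]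
  ring
end

section
/- If p, q, n, t are integers with p, q, n positive, p even and nq odd, then L_{pq} · ∑_{k=1}^{n} (−1)^{k−1} G_{2pk+pq+t} = L_{pn} · ∑_{k=1}^{q} (−1)^{k−1} G_{2pk+pn+t}. -/
open Finset

private lemma Grec15 (G : ℤ → ℤ) (hG : ∀ m : ℤ, G (m+1) = G m + G (m-1)) (a : ℤ) :
    G (a + 2) = G (a + 1) + G a := by
  have h := hG (a + 1)
  rw [show a + 1 + 1 = a + 2 by ring, show a + 1 - 1 = a by ring] at h
  exact h

private lemma key15 (L G : ℤ → ℤ) (hL0 : L 0 = 2) (hL1 : L 1 = 1)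
    (hL : ∀ m : ℤ, L (m+1) = L m + L (m-1))
    (hG : ∀ m : ℤ, G (m+1) = G m + G (m-1)) :
    ∀ j : ℕ, ∀ m : ℤ, G (m + (j:ℤ)) + (-1:ℤ)^j * G (m - (j:ℤ)) = L (j:ℤ) * G m := by
  have P0 : ∀ m : ℤ, G (m + ((0:ℕ):ℤ)) + (-1:ℤ)^(0:ℕ) * G (m - ((0:ℕ):ℤ)) = L ((0:ℕ):ℤ) * G m := by
    intro m; push_cast; rw [hL0]; ring_nf
  have P1 : ∀ m : ℤ, G (m + ((1:ℕ):ℤ)) + (-1:ℤ)^(1:ℕ) * G (m - ((1:ℕ):ℤ)) = L ((1:ℕ):ℤ) * G m := by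
    intro m
    have h := hG m
    push_cast; rw [hL1]; linarith
  have step : ∀ j : ℕ,
      (∀ m : ℤ, G (m + (j:ℤ)) + (-1:ℤ)^j * G (m - (j:ℤ)) = L (j:ℤ) * G m) →
      (∀ m : ℤ, G (m + ((j:ℤ)+1)) + (-1:ℤ)^(j+1) * G (m - ((j:ℤ)+1)) = L ((j:ℤ)+1) * G m) →
      ∀ m : ℤ, G (m + ((j:ℤ)+2)) + (-1:ℤ)^(j+2) * G (m - ((j:ℤ)+2)) = L ((j:ℤ)+2) * G m := by
    intro j ih0 ih1 m
    have e1 : G (m + (j:ℤ) + 2) = G (m + (j:ℤ) + 1) + G (m + (j:ℤ)) := Grec15 G hG _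
    have e2 : G (m - (j:ℤ) - 2 + 2) = G (m - (j:ℤ) - 2 + 1) + G (m - (j:ℤ) - 2) := Grec15 G hG _
    have e3 : L ((j:ℤ) + 2) = L ((j:ℤ) + 1) + L (j:ℤ) := by
      have h := hL ((j:ℤ) + 1)
      rw [show (j:ℤ) + 1 + 1 = (j:ℤ) + 2 by ring, show (j:ℤ) + 1 - 1 = (j:ℤ) by ring] at h
      exact h
    rw [show m - (j:ℤ) - 2 + 2 = m - (j:ℤ) by ring, show m - (j:ℤ) - 2 + 1 = m - ((j:ℤ)+1) by ring,
        show m - (j:ℤ) - 2 = m - ((j:ℤ)+2) by ring] at e2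
    rw [show m + (j:ℤ) + 2 = m + ((j:ℤ)+2) by ring, show m + (j:ℤ) + 1 = m + ((j:ℤ)+1) by ring] at e1
    have s0 := ih0 m
    have s1 := ih1 m
    rw [pow_succ, pow_succ]
    rw [pow_succ] at s1
    linear_combination s0 + s1 + e1 - (-1:ℤ)^j * e2 - G m * e3
  intro j
  induction j using Nat.twoStepInduction with
  | zero => exact P0
  | one => exact P1
  | more j ih0 ih1 =>
      intro m
      have := step j ih0 (by intro m'; have := ih1 m'; push_cast at this ⊢; convert this using 3 <;> ring) m
      push_cast at this ⊢
      convert this using 3 <;> push_cast <;> ring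

private lemma keyE15 (L G : ℤ → ℤ) (hL0 : L 0 = 2) (hL1 : L 1 = 1)
    (hL : ∀ m : ℤ, L (m+1) = L m + L (m-1))
    (hG : ∀ m : ℤ, G (m+1) = G m + G (m-1))
    (j : ℕ) (hj : Even j) (m : ℤ) :
    G (m + (j:ℤ)) + G (m - (j:ℤ)) = L (j:ℤ) * G m := by
  have h := key15 L G hL0 hL1 hL hG j m
  rw [hj.neg_one_pow] at h
  linarith

private lemma Lpos15 (L : ℤ → ℤ) (hL0 : L 0 = 2) (hL1 : L 1 = 1)
    (hL : ∀ m : ℤ, L (m+1) = L m + L (m-1)) :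
    ∀ j : ℕ, 0 < L (j:ℤ) := by
  intro j
  induction j using Nat.twoStepInduction with
  | zero => simpa using hL0.ge.trans_lt' (by norm_num)
  | one => simp [hL1]
  | more j ih0 ih1 =>
      have h := hL ((j:ℤ) + 1)
      rw [show (j:ℤ) + 1 + 1 = ((j:ℤ) + 2) by ring, show (j:ℤ) + 1 - 1 = (j:ℤ) by ring] at h
      push_cast
      push_cast at ih0 ih1
      linarith

private lemma sum15 (L G : ℤ → ℤ) (hL0 : L 0 = 2) (hL1 : L 1 = 1)
    (hL : ∀ m : ℤ, L (m+1) = L m + L (m-1))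
    (hG : ∀ m : ℤ, G (m+1) = G m + G (m-1))
    (p : ℕ) (hpe : Even p) (c : ℤ) :
    ∀ i : ℕ, L (p:ℤ) * ∑ k ∈ Icc 1 (2*i+1), (-1 : ℤ)^(k-1) * G ((2*p*k : ℤ) + c) =
      L ((p:ℤ)*(2*i+1)) * G ((p:ℤ)*(2*i+1) + p + c) := by
  intro i
  induction i with
  | zero =>
      simp only [Nat.mul_zero, Nat.zero_add, Finset.Icc_self, Finset.sum_singleton]
      push_cast
      ring_nf
  | succ i ih =>
      have h1 : 2*(i+1)+1 = (2*i+2)+1 := by omega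
      rw [h1, Finset.sum_Icc_succ_top (by omega), Finset.sum_Icc_succ_top (by omega)]
      have hs1 : ((-1:ℤ))^(2*i+1+1-1) = -1 := Odd.neg_one_pow ⟨i, by omega⟩
      have hs2 : ((-1:ℤ))^(2*i+2+1-1) = 1 := Even.neg_one_pow ⟨i+1, by omega⟩
      rw [hs1, hs2]
      have A1 := keyE15 L G hL0 hL1 hL hG (p*(2*i+3)) (hpe.mul_right _)
        ((p:ℤ)*(2*(i:ℤ)+3) + p + c)
      have A2 := keyE15 L G hL0 hL1 hL hG (p*(2*i+1)) (hpe.mul_right _)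
        ((p:ℤ)*(2*(i:ℤ)+1) + p + c)
      have B1 := keyE15 L G hL0 hL1 hL hG p hpe (2*(p:ℤ)*(2*(i:ℤ)+3) + c)
      have B2 := keyE15 L G hL0 hL1 hL hG p hpe (2*(p:ℤ)*(2*(i:ℤ)+2) + c)
      push_cast at A1 A2 B1 B2 ih ⊢
      ring_nf at A1 A2 B1 B2 ih ⊢
      have hS : (∑ x ∈ Icc 1 (1+i*2), (-1:ℤ)^(x-1) * G ((p:ℤ)*2*(x:ℤ) + c)) =
          ∑ x ∈ Icc 1 (1+i*2), G ((p:ℤ)*(x:ℤ)*2 + c) * (-1:ℤ)^(x-1) :=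
        Finset.sum_congr rfl (fun x _ => by
          rw [show (p:ℤ)*2*(x:ℤ) = (p:ℤ)*(x:ℤ)*2 by ring]; ring)
      linarith [A1, A2, B1, B2, ih]
theorem stmt15 (L G : ℤ → ℤ)
    (hL0 : L 0 = 2) (hL1 : L 1 = 1) (hL : ∀ m : ℤ, L (m+1) = L m + L (m-1))
    (hG : ∀ m : ℤ, G (m+1) = G m + G (m-1))
    (p q n : ℕ) (t : ℤ) (hp : 0 < p) (hq : 0 < q) (hn : 0 < n)
    (hpe : Even p) (hodd : Odd (n*q)) :
    L (p*q) * ∑ k ∈ Icc 1 n, (-1 : ℤ)^(k-1) * G ((2*p*k : ℤ) + p*q + t) =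
    L (p*n) * ∑ k ∈ Icc 1 q, (-1 : ℤ)^(k-1) * G ((2*p*k : ℤ) + p*n + t) := by
  rw [Nat.odd_mul] at hodd
  obtain ⟨hon, hoq⟩ := hodd
  obtain ⟨i, hi⟩ := hon
  obtain ⟨j, hj⟩ := hoq
  subst hi hj
  have hLp := (Lpos15 L hL0 hL1 hL p).ne'
  apply mul_left_cancel₀ hLp
  have E1 := sum15 L G hL0 hL1 hL hG p hpe ((p:ℤ)*(2*(j:ℤ)+1)+t) i
  have E2 := sum15 L G hL0 hL1 hL hG p hpe ((p:ℤ)*(2*(i:ℤ)+1)+t) j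
  push_cast at E1 E2 ⊢
  ring_nf at E1 E2 ⊢
  have hg : G ((p:ℤ)*(2*(i:ℤ)+1)+(p:ℤ)+(p:ℤ)*(2*(j:ℤ)+1)+t) =
      G ((p:ℤ)*(2*(j:ℤ)+1)+(p:ℤ)+(p:ℤ)*(2*(i:ℤ)+1)+t) := by
    rw [show (p:ℤ)*(2*(i:ℤ)+1)+(p:ℤ)+(p:ℤ)*(2*(j:ℤ)+1)+t
        = (p:ℤ)*(2*(j:ℤ)+1)+(p:ℤ)+(p:ℤ)*(2*(i:ℤ)+1)+t by ring]
  have hS1 : (∑ x ∈ Icc 1 (1+i*2), (-1:ℤ)^(x-1) * G ((p:ℤ)*2*(x:ℤ) + (p:ℤ)*(2*(j:ℤ)+1) + t)) =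
      ∑ x ∈ Icc 1 (1+i*2), G ((p:ℤ) + (p:ℤ)*(x:ℤ)*2 + (p:ℤ)*(j:ℤ)*2 + t) * (-1:ℤ)^(x-1) :=
    Finset.sum_congr rfl (fun x _ => by
      rw [show (p:ℤ)*2*(x:ℤ) + (p:ℤ)*(2*(j:ℤ)+1) + t
          = (p:ℤ) + (p:ℤ)*(x:ℤ)*2 + (p:ℤ)*(j:ℤ)*2 + t by ring]; ring)
  rw [show (∑ x ∈ Icc 1 (1+i*2), G ((p:ℤ) + (p:ℤ)*(j:ℤ)*2 + (p:ℤ)*(x:ℤ)*2 + t) * (-1:ℤ)^(x-1)) =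
      ∑ x ∈ Icc 1 (1+i*2), G ((p:ℤ) + (p:ℤ)*(x:ℤ)*2 + (p:ℤ)*(j:ℤ)*2 + t) * (-1:ℤ)^(x-1) from
    Finset.sum_congr rfl (fun x _ => by ring_nf)]
  linear_combination (norm := ring_nf) L ((p:ℤ)*(2*(j:ℤ)+1)) * E1 - L ((p:ℤ)*(2*(i:ℤ)+1)) * E2
    + L ((p:ℤ)*(2*(i:ℤ)+1)) * L ((p:ℤ)*(2*(j:ℤ)+1)) * hg
end

section
/- If p, q, n, t are positive integers with pnq odd and all relevant terms G_{pk+t}, G_{pk+2pq+t}, G_{pk+2pn+t} nonzero, then L_{pq} · ∑_{k=1}^{2n} (−1)^{k−1} G_{pk+pq+t} / (G_{pk+t} G_{pk+2pq+t}) = L_{pn} · ∑_{k=1}^{2q} (−1)^{k−1} G_{pk+pn+t} / (G_{pk+t} G_{pk+2pn+t}). -/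
open Finset

lemma keyLG (L : ℕ → ℤ) (G : ℕ → ℝ)
    (hL0 : L 0 = 2) (hL1 : L 1 = 1) (hL : ∀ m, L (m+2) = L (m+1) + L m)
    (hG : ∀ m, G (m+2) = G (m+1) + G m) :
    ∀ m a, (L m : ℝ) * G (a + m) = G (a + 2*m) + (-1:ℝ)^m * G a := by
  intro m
  induction m using Nat.twoStepInduction with
  | zero => intro a; simp [hL0]; ring
  | one => intro a; simp [hL1]; have := hG a; push_cast; linarith
  | more m ih1 ih2 =>
    intro a
    have A := ih2 (a+1)
    have B := ih1 (a+2)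
    have hc : (L (m+2) : ℝ) = (L (m+1) : ℝ) + (L m : ℝ) := by exact_mod_cast congrArg Int.cast (hL m)
    have e1 : a + 1 + (m+1) = a + (m+2) := by omega
    have e2 : a + 2 + m = a + (m+2) := by omega
    have e3 : a + 1 + 2*(m+1) = a + 2*m + 3 := by omega
    have e4 : a + 2 + 2*m = a + 2*m + 2 := by omega
    have e5 : a + 2*(m+2) = a + 2*m + 2 + 2 := by omega
    rw [e1, e3] at A
    rw [e2, e4] at B
    rw [e5, hc, hG (a + 2*m + 2)]
    have h6 := hG a
    have p1 : (-1:ℝ)^(m+1) = -(-1:ℝ)^m := by rw [pow_succ]; ring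
    have p2 : (-1:ℝ)^(m+2) = (-1:ℝ)^m := by rw [pow_succ, pow_succ]; ring
    rw [p1] at A
    rw [p2]
    have e7 : a + 2*m + 2 + 1 = a + 2*m + 3 := by omega
    rw [e7]
    linear_combination A + B + (-1:ℝ)^m * h6

lemma swapSum (f : ℕ → ℝ) (N M : ℕ) :
    ∑ k ∈ Icc 1 N, (f k - f (k + M)) = ∑ k ∈ Icc 1 M, (f k - f (k + N)) := by
  have key : ∀ (A B : ℕ), ∑ k ∈ Icc 1 A, f (k + B) = ∑ k ∈ Ico (1+B) (A+1+B), f k := by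
    intro A B
    rw [show Icc 1 A = Ico 1 (A+1) from rfl, ← Finset.sum_Ico_add]
    exact Finset.sum_congr rfl fun x _ => by rw [add_comm]
  rw [Finset.sum_sub_distrib, Finset.sum_sub_distrib, key, key]
  rw [show Icc 1 N = Ico 1 (N+1) from rfl, show Icc 1 M = Ico 1 (M+1) from rfl]
  have c1 : ∑ k ∈ Ico 1 (N+1), f k + ∑ k ∈ Ico (N+1) (M+N+1), f k = ∑ k ∈ Ico 1 (M+N+1), f k := by
    apply Finset.sum_Ico_consecutive <;> omega
  have c2 : ∑ k ∈ Ico 1 (M+1), f k + ∑ k ∈ Ico (M+1) (M+N+1), f k = ∑ k ∈ Ico 1 (M+N+1), f k := by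
    apply Finset.sum_Ico_consecutive <;> omega
  rw [show 1+M = M+1 from by omega, show N+1+M = M+N+1 from by omega,
      show 1+N = N+1 from by omega, show M+1+N = M+N+1 from by omega]
  linarith

lemma sideLem (L : ℕ → ℤ) (G : ℕ → ℝ)
    (hL0 : L 0 = 2) (hL1 : L 1 = 1) (hL : ∀ m, L (m+2) = L (m+1) + L m)
    (hG : ∀ m, G (m+2) = G (m+1) + G m)
    (p s t N : ℕ) (hodd : Odd (p*s))
    (h : ∀ k ∈ Icc 1 N, G (p*k + t) ≠ 0 ∧ G (p*k + 2*p*s + t) ≠ 0) :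
    (L (p*s) : ℝ) * ∑ k ∈ Icc 1 N, (-1 : ℝ)^(k-1) * G (p*k + p*s + t) / (G (p*k + t) * G (p*k + 2*p*s + t)) =
    ∑ k ∈ Icc 1 N, ((-1:ℝ)^(k-1) / G (p*k + t) - (-1:ℝ)^(k+2*s-1) / G (p*(k+2*s) + t)) := by
  rw [Finset.mul_sum]
  apply Finset.sum_congr rfl
  intro k hk
  obtain ⟨ha, hb⟩ := h k hk
  have hk1 : 1 ≤ k := (Finset.mem_Icc.mp hk).1
  have key := keyLG L G hL0 hL1 hL hG (p*s) (p*k + t)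
  have eo : (-1:ℝ)^(p*s) = -1 := Odd.neg_one_pow hodd
  rw [eo] at key
  have e1 : p*k + t + p*s = p*k + p*s + t := by omega
  have e2 : p*k + t + 2*(p*s) = p*k + 2*p*s + t := by ring
  rw [e1, e2] at key
  have e3 : p*(k+2*s) + t = p*k + 2*p*s + t := by ring
  have e4 : (-1:ℝ)^(k+2*s-1) = (-1:ℝ)^(k-1) := by
    rw [show k+2*s-1 = (k-1) + 2*s from by omega, pow_add]
    simp [pow_mul]
  rw [e3, e4]
  field_simp
  linear_combination key

theorem stmt16 (L : ℕ → ℤ) (G : ℕ → ℝ)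
    (hL0 : L 0 = 2) (hL1 : L 1 = 1) (hL : ∀ m, L (m+2) = L (m+1) + L m)
    (hG : ∀ m, G (m+2) = G (m+1) + G m)
    (p q n t : ℕ) (hp : 0 < p) (hq : 0 < q) (hn : 0 < n) (ht : 0 < t)
    (hodd : Odd (p*n*q))
    (h1 : ∀ k ∈ Icc 1 (2*n), G (p*k + t) ≠ 0 ∧ G (p*k + 2*p*q + t) ≠ 0)
    (h2 : ∀ k ∈ Icc 1 (2*q), G (p*k + t) ≠ 0 ∧ G (p*k + 2*p*n + t) ≠ 0) :
    (L (p*q) : ℝ) * ∑ k ∈ Icc 1 (2*n), (-1 : ℝ)^(k-1) * G (p*k + p*q + t) / (G (p*k + t) * G (p*k + 2*p*q + t)) =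
    (L (p*n) : ℝ) * ∑ k ∈ Icc 1 (2*q), (-1 : ℝ)^(k-1) * G (p*k + p*n + t) / (G (p*k + t) * G (p*k + 2*p*n + t)) := by
  have hop : Odd p ∧ Odd n ∧ Odd q := by
    rw [Nat.odd_mul, Nat.odd_mul] at hodd
    exact ⟨hodd.1.1, hodd.1.2, hodd.2⟩
  have hpq : Odd (p*q) := Nat.odd_mul.mpr ⟨hop.1, hop.2.2⟩
  have hpn : Odd (p*n) := Nat.odd_mul.mpr ⟨hop.1, hop.2.1⟩
  rw [sideLem L G hL0 hL1 hL hG p q t (2*n) hpq h1,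
      sideLem L G hL0 hL1 hL hG p n t (2*q) hpn h2]
  exact swapSum (fun k => (-1:ℝ)^(k-1) / G (p*k + t)) (2*n) (2*q)
end

section
/- If p, q, n, t are positive integers with pnq odd and all relevant denominators nonzero, then L_{pq} · ∑_{k=1}^{n} G_{2pk+pq+t} / (G_{2pk+t} G_{2pk+2pq+t}) = L_{pn} · ∑_{k=1}^{q} G_{2pk+pn+t} / (G_{2pk+t} G_{2pk+2pn+t}). -/
open Finset

private lemma sum_range_split {F : ℕ → ℝ} (a b : ℕ) :
    ∑ i ∈ range (a + b), F i = (∑ i ∈ range a, F i) + ∑ i ∈ range b, F (a + i) := by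
  induction b with
  | zero => simp
  | succ b ih => rw [← add_assoc, sum_range_succ, sum_range_succ, ih, add_assoc]

private lemma key_id (L : ℕ → ℤ) (G : ℕ → ℝ)
    (hL0 : L 0 = 2) (hL1 : L 1 = 1) (hL : ∀ m, L (m+2) = L (m+1) + L m)
    (hG : ∀ m, G (m+2) = G (m+1) + G m) :
    ∀ m a, G (a + 2*m) + (-1:ℝ)^m * G a = (L m : ℝ) * G (a + m) := by
  intro m
  induction m using Nat.twoStepInduction with
  | zero => intro a; simp [hL0]; ring
  | one => intro a; rw [hL1]; push_cast; rw [show a + 2*1 = a + 2 by ring, hG a]; ring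
  | more m ih1 ih2 =>
    intro a
    have e1 := ih2 (a + 1)
    have e2 := ih1 (a + 2)
    have hLc : ((L (m+2) : ℝ)) = (L (m+1) : ℝ) + (L m : ℝ) := by exact_mod_cast hL m
    have r1 := hG (a + 2*m + 2)
    have r2 := hG a
    have hp1 : ((-1:ℝ))^(m+1) = -(-1:ℝ)^m := by rw [pow_succ]; ring
    have hp2 : ((-1:ℝ))^(m+2) = (-1:ℝ)^m := by rw [pow_add]; ring
    rw [show a + 1 + 2*(m+1) = a + 2*m + 3 by ring, show a + 1 + (m+1) = a + m + 2 by ring,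
      hp1] at e1
    rw [show a + 2 + 2*m = a + 2*m + 2 by ring, show a + 2 + m = a + m + 2 by ring] at e2
    rw [show a + 2*(m+2) = a + 2*m + 2 + 2 by ring, show a + (m+2) = a + m + 2 by ring,
      hp2, hLc, r1, show a + 2*m + 2 + 1 = a + 2*m + 3 by ring]
    rw [r2] at e2
    linarith [e1, e2]

theorem stmt17 (L : ℕ → ℤ) (G : ℕ → ℝ)
    (hL0 : L 0 = 2) (hL1 : L 1 = 1) (hL : ∀ m, L (m+2) = L (m+1) + L m)
    (hG : ∀ m, G (m+2) = G (m+1) + G m)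
    (p q n t : ℕ) (hp : 0 < p) (hq : 0 < q) (hn : 0 < n) (ht : 0 < t)
    (hodd : Odd (p*n*q))
    (h1 : ∀ k ∈ Icc 1 n, G (2*p*k + t) ≠ 0 ∧ G (2*p*k + 2*p*q + t) ≠ 0)
    (h2 : ∀ k ∈ Icc 1 q, G (2*p*k + t) ≠ 0 ∧ G (2*p*k + 2*p*n + t) ≠ 0) :
    (L (p*q) : ℝ) * ∑ k ∈ Icc 1 n, G (2*p*k + p*q + t) / (G (2*p*k + t) * G (2*p*k + 2*p*q + t)) =
    (L (p*n) : ℝ) * ∑ k ∈ Icc 1 q, G (2*p*k + p*n + t) / (G (2*p*k + t) * G (2*p*k + 2*p*n + t)) := by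
  have hopn : Odd (p*n) := (Nat.odd_mul.mp hodd).1
  have hoq : Odd q := (Nat.odd_mul.mp hodd).2
  have hop : Odd p := (Nat.odd_mul.mp hopn).1
  have hopq : Odd (p*q) := hop.mul hoq
  have key := key_id L G hL0 hL1 hL hG
  have key' : ∀ m, Odd m → ∀ a, (L m : ℝ) * G (a + m) = G (a + 2*m) - G a := by
    intro m hm a
    have := key m a
    rw [hm.neg_one_pow] at this
    linarith
  -- termwise rewriting
  have hterm : ∀ (m : ℕ), Odd m → ∀ k : ℕ, G (2*p*k + t) ≠ 0 → G (2*p*k + 2*m + t) ≠ 0 →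
      (L m : ℝ) * (G (2*p*k + m + t) / (G (2*p*k + t) * G (2*p*k + 2*m + t)))
      = (G (2*p*k + t))⁻¹ - (G (2*p*k + 2*m + t))⁻¹ := by
    intro m hm k ha hb
    have hk' := key' m hm (2*p*k + t)
    rw [show 2*p*k + t + m = 2*p*k + m + t by ring,
      show 2*p*k + t + 2*m = 2*p*k + 2*m + t by ring] at hk'
    rw [mul_div_assoc', hk']
    field_simp
  have hL1' : (L (p*q) : ℝ) * ∑ k ∈ Icc 1 n,
      G (2*p*k + p*q + t) / (G (2*p*k + t) * G (2*p*k + 2*p*q + t))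
      = ∑ k ∈ Icc 1 n, ((G (2*p*k + t))⁻¹ - (G (2*p*k + 2*p*q + t))⁻¹) := by
    rw [Finset.mul_sum]
    refine Finset.sum_congr rfl fun k hk => ?_
    have h := h1 k hk
    have := hterm (p*q) hopq k h.1 (by rw [show 2*p*k + 2*(p*q) + t = 2*p*k + 2*p*q + t by ring]; exact h.2)
    rw [show 2*p*k + 2*(p*q) + t = 2*p*k + 2*p*q + t by ring] at this
    exact this
  have hL2' : (L (p*n) : ℝ) * ∑ k ∈ Icc 1 q,
      G (2*p*k + p*n + t) / (G (2*p*k + t) * G (2*p*k + 2*p*n + t))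
      = ∑ k ∈ Icc 1 q, ((G (2*p*k + t))⁻¹ - (G (2*p*k + 2*p*n + t))⁻¹) := by
    rw [Finset.mul_sum]
    refine Finset.sum_congr rfl fun k hk => ?_
    have h := h2 k hk
    have := hterm (p*n) hopn k h.1 (by rw [show 2*p*k + 2*(p*n) + t = 2*p*k + 2*p*n + t by ring]; exact h.2)
    rw [show 2*p*k + 2*(p*n) + t = 2*p*k + 2*p*n + t by ring] at this
    exact this
  rw [hL1', hL2']
  -- reduce to sums of a single function
  set F : ℕ → ℝ := fun j => (G (2*p*j + t))⁻¹ with hF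
  have hre : ∀ (a b : ℕ), ∑ k ∈ Icc 1 a, ((G (2*p*k + t))⁻¹ - (G (2*p*k + 2*p*b + t))⁻¹)
      = ∑ k ∈ Icc 1 a, (F k - F (k + b)) := by
    intro a b
    refine Finset.sum_congr rfl fun k _ => ?_
    simp only [hF]
    rw [show 2*p*(k+b) + t = 2*p*k + 2*p*b + t by ring]
  rw [hre n q, hre q n]
  -- now a pure sum identity
  have main : ∀ (a b : ℕ), ∑ k ∈ Icc 1 a, (F k - F (k + b)) = ∑ i ∈ range a, (F (1+i) - F (1+i+b)) := by
    intro a b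
    rw [← Finset.Ico_add_one_right_eq_Icc, Finset.sum_Ico_eq_sum_range,
      show a + 1 - 1 = a by omega]
  rw [main n q, main q n]
  rw [Finset.sum_sub_distrib, Finset.sum_sub_distrib]
  have e1 : ∑ i ∈ range n, F (1+i+q) = ∑ i ∈ range n, F (q + (1+i)) := by
    refine Finset.sum_congr rfl fun i _ => by rw [show 1+i+q = q + (1+i) by ring]
  have e2 : ∑ i ∈ range q, F (1+i+n) = ∑ i ∈ range q, F (n + (1+i)) := by
    refine Finset.sum_congr rfl fun i _ => by rw [show 1+i+n = n + (1+i) by ring]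
  rw [e1, e2]
  have s1 := sum_range_split (F := fun i => F (1+i)) q n
  have s2 := sum_range_split (F := fun i => F (1+i)) n q
  simp only [show ∀ a i : ℕ, 1 + (a + i) = a + (1 + i) from fun a i => by ring] at s1 s2
  rw [show q + n = n + q by ring] at s1
  linarith [s1, s2]
end

section
/- Let W be the Horadam sequence W_0=a, W_1=b, W_i = P·W_{i−1} − Q·W_{i−2}, and U_i = W_i(0,1;P,Q). If n, q are nonnegative integers, p is a positive integer, and W_{pk} ≠ 0 for all 1 ≤ k ≤ n+q, then U_{pq} · ∑_{k=1}^{n} Q^{pk} / (W_{pk} W_{pk+pq}) = U_{pn} · ∑_{k=1}^{q} Q^{pk} / (W_{pk} W_{pk+pn}), provided also A = b − β·a ≠ 0 where β = (P − √(P²−4Q))/2. -/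
open Finset

theorem sumtel (g : ℕ → ℝ) (n q : ℕ) :
    ∑ k ∈ Icc 1 n, (g k - g (k+q)) = ∑ k ∈ Icc 1 q, (g k - g (k+n)) := by
  have h2 : ∀ m l : ℕ, ∑ k ∈ Icc 1 m, g (k + l) =
      (∑ i ∈ range (l+m), g (1+i)) - ∑ i ∈ range l, g (1+i) := by
    intro m l
    rw [Finset.sum_range_add]
    have : ∑ k ∈ Icc 1 m, g (k + l) = ∑ i ∈ range m, g (1 + (l + i)) := by
      rw [← Finset.Ico_add_one_right_eq_Icc, Finset.sum_Ico_eq_sum_range]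
      simp only [Nat.add_sub_cancel]
      exact Finset.sum_congr rfl fun i _ => by congr 1; omega
    rw [this]; ring
  have h1 : ∀ m : ℕ, ∑ k ∈ Icc 1 m, g k = ∑ i ∈ range m, g (1+i) := by
    intro m; rw [← Finset.Ico_add_one_right_eq_Icc, Finset.sum_Ico_eq_sum_range]
    simp only [Nat.add_sub_cancel]
  simp only [Finset.sum_sub_distrib, h1, h2]
  rw [show q + n = n + q by ring]
  ring

theorem stmt18 (a b P Q : ℤ) (hPQ : P * Q ≠ 0) (hΔ : P^2 - 4*Q > 0)
    (W U : ℕ → ℝ)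
    (hW0 : W 0 = a) (hW1 : W 1 = b) (hW : ∀ i, W (i+2) = P * W (i+1) - Q * W i)
    (hU0 : U 0 = 0) (hU1 : U 1 = 1) (hU : ∀ i, U (i+2) = P * U (i+1) - Q * U i)
    (n q p : ℕ) (hp : 0 < p)
    (hWnz : ∀ k ∈ Icc 1 (n+q), W (p*k) ≠ 0)
    (hA : (b : ℝ) - (P - Real.sqrt (P^2 - 4*Q)) / 2 * a ≠ 0) :
    U (p*q) * ∑ k ∈ Icc 1 n, (Q : ℝ)^(p*k) / (W (p*k) * W (p*k + p*q)) =
    U (p*n) * ∑ k ∈ Icc 1 q, (Q : ℝ)^(p*k) / (W (p*k) * W (p*k + p*n)) := by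
  have hDpos : (0:ℝ) < (P:ℝ)^2 - 4*Q := by exact_mod_cast hΔ
  obtain ⟨s, hsdef⟩ : ∃ x:ℝ, x = Real.sqrt ((P:ℝ)^2 - 4*(Q:ℝ)) := ⟨_, rfl⟩
  have hs2 : s^2 = (P:ℝ)^2 - 4*Q := by rw [hsdef]; exact Real.sq_sqrt hDpos.le
  have hspos : 0 < s := by rw [hsdef]; exact Real.sqrt_pos.mpr hDpos
  obtain ⟨α, hαdef⟩ : ∃ x:ℝ, x = ((P:ℝ) + s)/2 := ⟨_, rfl⟩
  obtain ⟨β, hβdef⟩ : ∃ x:ℝ, x = ((P:ℝ) - s)/2 := ⟨_, rfl⟩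
  have hprod : α * β = Q := by rw [hαdef, hβdef]; nlinarith [hs2]
  have hd : α - β = s := by rw [hαdef, hβdef]; ring
  have hα2 : α^2 = P*α - Q := by rw [hαdef]; nlinarith [hs2]
  have hβ2 : β^2 = P*β - Q := by rw [hβdef]; nlinarith [hs2]
  have closed : ∀ (V : ℕ → ℝ) (c1 c2 : ℝ), (∀ i, V (i+2) = P*V (i+1) - Q*V i) →
      s * V 0 = c1 + c2 → s * V 1 = c1*α + c2*β →
      ∀ m, s * V m = c1*α^m + c2*β^m := by
    intro V c1 c2 hrec h0 h1 m
    induction m using Nat.strong_induction_on with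
    | _ m ih =>
      match m with
      | 0 => simpa using h0
      | 1 => simpa using h1
      | (j+2) =>
        have e1 := ih (j+1) (by omega)
        have e0 := ih j (by omega)
        rw [hrec j]
        linear_combination (P:ℝ)*e1 - (Q:ℝ)*e0 - c1*α^j*hα2 - c2*β^j*hβ2
  have hWc := closed W ((b:ℝ) - a*β) ((a:ℝ)*α - b) hW
    (by rw [hW0]; linear_combination (-(a:ℝ))*hd) (by rw [hW1]; linear_combination (-(b:ℝ))*hd)
  have hUc := closed U 1 (-1) hU (by rw [hU0]; ring) (by rw [hU1]; linear_combination -hd)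
  have hA' : (b:ℝ) - (a:ℝ)*β ≠ 0 := by
    intro h; apply hA; rw [hβdef, hsdef] at h; linear_combination h
  have hs : s ≠ 0 := ne_of_gt hspos
  have hkey : ∀ k m : ℕ, β^k * W (k+m) - β^(k+m) * W k = ((b:ℝ) - a*β) * Q^k * U m := by
    intro k m
    have h1 := hWc (k+m)
    have h2 := hWc k
    have h3 := hUc m
    have hQk : α^k * β^k = (Q:ℝ)^k := by rw [← mul_pow, hprod]
    have hmul : s * (β^k * W (k+m) - β^(k+m) * W k) = s * (((b:ℝ) - a*β) * Q^k * U m) := by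
      linear_combination β^k * h1 - β^(k+m) * h2 - ((b:ℝ)-a*β)*(α^k*β^k)*h3
        + ((b:ℝ)-a*β)*(s*U m)*hQk
    exact mul_left_cancel₀ hs hmul
  have hterm : ∀ k m : ℕ, W k ≠ 0 → W (k+m) ≠ 0 →
      U m * ((Q:ℝ)^k / (W k * W (k+m))) =
        (β^k / W k - β^(k+m) / W (k+m)) / ((b:ℝ) - a*β) := by
    intro k m w1 w2
    rw [div_sub_div _ _ w1 w2, div_div, eq_div_iff (mul_ne_zero (mul_ne_zero w1 w2) hA')]
    have hX : (Q:ℝ)^k / (W k * W (k+m)) * (W k * W (k+m)) = (Q:ℝ)^k :=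
      div_mul_cancel₀ _ (mul_ne_zero w1 w2)
    linear_combination ((b:ℝ) - a*β) * U m * hX - hkey k m
  set g : ℕ → ℝ := fun k => β^(p*k) / W (p*k) with hgdef
  have hside : ∀ N M : ℕ, N + M = n + q →
      U (p*M) * ∑ k ∈ Icc 1 N, (Q : ℝ)^(p*k) / (W (p*k) * W (p*k + p*M)) =
      (∑ k ∈ Icc 1 N, (g k - g (k+M))) / ((b:ℝ) - a*β) := by
    intro N M hNM
    rw [Finset.mul_sum, Finset.sum_div]
    apply Finset.sum_congr rfl
    intro k hk
    simp only [mem_Icc] at hk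
    have w1 : W (p*k) ≠ 0 := hWnz k (by simp only [mem_Icc]; omega)
    have hpk : p*k + p*M = p*(k+M) := by ring
    have w2 : W (p*k + p*M) ≠ 0 := by
      rw [hpk]; exact hWnz (k+M) (by simp only [mem_Icc]; omega)
    rw [hterm (p*k) (p*M) w1 w2]
    congr 1
    simp only [hgdef, hpk]
  rw [hside n q rfl, hside q n (by omega), sumtel g n q]
end

section
/- Let W be the Horadam sequence W_0=a, W_1=b, W_i = P·W_{i−1} − Q·W_{i−2}, and U_i the same recurrence with seeds 0, 1. If n and q are nonnegative even integers, p is a positive integer, ε ∈ {+1, −1}, and W_{pk} ≠ 0 for all 1 ≤ k ≤ n+q, then U_{pq} · ∑_{k=1}^{n} (ε·Q^p)^k / (W_{pk} W_{pk+pq}) = U_{pn} · ∑_{k=1}^{q} (ε·Q^p)^k / (W_{pk} W_{pk+pn}). -/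
open Finset

private lemma casor19 (P Q : ℝ) (X Y : ℕ → ℝ)
    (hX : ∀ i, X (i+2) = P * X (i+1) - Q * X i)
    (hY : ∀ i, Y (i+2) = P * Y (i+1) - Q * Y i) :
    ∀ k, X (k+1) * Y k - X k * Y (k+1) = Q^k * (X 1 * Y 0 - X 0 * Y 1) := by
  intro k
  induction k with
  | zero => simp
  | succ k ih =>
    rw [show k+1+1 = k+2 from rfl, hX k, hY k]
    linear_combination Q * ih

private lemma pairid19 (P Q : ℝ) (X Y U : ℕ → ℝ)
    (hX : ∀ i, X (i+2) = P * X (i+1) - Q * X i)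
    (hY : ∀ i, Y (i+2) = P * Y (i+1) - Q * Y i)
    (hU0 : U 0 = 0) (hU1 : U 1 = 1)
    (hU : ∀ i, U (i+2) = P * U (i+1) - Q * U i) :
    ∀ k m, X (k+m) * Y k - X k * Y (k+m)
      = Q^k * (X 1 * Y 0 - X 0 * Y 1) * U m := by
  intro k
  have H : ∀ m, (X (k+m) * Y k - X k * Y (k+m)
      = Q^k * (X 1 * Y 0 - X 0 * Y 1) * U m) ∧
      (X (k+(m+1)) * Y k - X k * Y (k+(m+1))
      = Q^k * (X 1 * Y 0 - X 0 * Y 1) * U (m+1)) := by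
    intro m
    induction m with
    | zero =>
      constructor
      · simp [hU0]
      · rw [hU1, mul_one]; exact casor19 P Q X Y hX hY k
    | succ m ih =>
      refine ⟨ih.2, ?_⟩
      simp only [show m+1+1 = m+2 from rfl]
      rw [show k+(m+2) = (k+m)+2 from by omega, hX (k+m), hY (k+m), hU m,
        show (k+m)+1 = k+(m+1) from by omega]
      linear_combination P * ih.2 - Q * ih.1
  exact fun m => (H m).1

private noncomputable def Zs19 (a b P Q : ℝ) : ℕ → ℝ
  | 0 => -b
  | 1 => a
  | (n+2) => P * Zs19 a b P Q (n+1) - Q * Zs19 a b P Q n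

theorem stmt19 (a b P Q : ℤ) (hPQ : P * Q ≠ 0) (hΔ : P^2 - 4*Q > 0)
    (W U : ℕ → ℝ)
    (hW0 : W 0 = a) (hW1 : W 1 = b) (hW : ∀ i, W (i+2) = P * W (i+1) - Q * W i)
    (hU0 : U 0 = 0) (hU1 : U 1 = 1) (hU : ∀ i, U (i+2) = P * U (i+1) - Q * U i)
    (n q p : ℕ) (hp : 0 < p) (hn : Even n) (hq : Even q)
    (ε : ℝ) (hε : ε = 1 ∨ ε = -1)
    (hWnz : ∀ k ∈ Icc 1 (n+q), W (p*k) ≠ 0) :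
    U (p*q) * ∑ k ∈ Icc 1 n, (ε * (Q : ℝ)^p)^k / (W (p*k) * W (p*k + p*q)) =
    U (p*n) * ∑ k ∈ Icc 1 q, (ε * (Q : ℝ)^p)^k / (W (p*k) * W (p*k + p*n)) := by
  set Z : ℕ → ℝ := Zs19 (a:ℝ) (b:ℝ) (P:ℝ) (Q:ℝ) with hZdef
  have hZrec : ∀ i, Z (i+2) = (P:ℝ) * Z (i+1) - (Q:ℝ) * Z i := by
    intro i; simp [hZdef, Zs19]
  have hZ0 : Z 0 = -(b:ℝ) := by simp [hZdef, Zs19]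
  have hZ1 : Z 1 = (a:ℝ) := by simp [hZdef, Zs19]
  set lam : ℝ := (a:ℝ)^2 + (b:ℝ)^2 with hlam
  by_cases hab : (a:ℝ) = 0 ∧ (b:ℝ) = 0
  · -- degenerate: W is identically zero, so n = q = 0
    have hWz : ∀ i, W i = 0 ∧ W (i+1) = 0 := by
      intro i
      induction i with
      | zero => exact ⟨by rw [hW0, hab.1], by rw [hW1, hab.2]⟩
      | succ i ih => exact ⟨ih.2, by rw [hW i, ih.1, ih.2]; ring⟩
    rcases Nat.eq_zero_or_pos (n+q) with h0 | h1
    · have hn0 : n = 0 := by omega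
      have hq0 : q = 0 := by omega
      subst hn0; subst hq0
      simp
    · exfalso
      exact hWnz 1 (by simp only [Finset.mem_Icc]; omega) (hWz (p*1)).1
  · have hlamne : lam ≠ 0 := by
      rw [hlam]
      intro h
      apply hab
      constructor <;> nlinarith [sq_nonneg (a:ℝ), sq_nonneg (b:ℝ)]
    have hQne : (Q:ℝ) ≠ 0 := by
      intro h
      apply hPQ
      have : Q = 0 := by exact_mod_cast h
      simp [this]
    have key : ∀ k m : ℕ, Z (k+m) * W k - Z k * W (k+m)
        = (Q:ℝ)^k * lam * U m := by
      intro k m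
      have := pairid19 (P:ℝ) (Q:ℝ) Z W U hZrec hW hU0 hU1 hU k m
      rw [hZ0, hZ1, hW0, hW1] at this
      rw [this, hlam]; ring
    have hε2 : ε^2 = 1 := by rcases hε with rfl | rfl <;> norm_num
    -- the telescoping function
    set g : ℕ → ℝ := fun k => ε^k * Z (p*k) / (lam * W (p*k)) with hg
    have main : ∀ m r : ℕ, Even m → m + r = n + q →
        U (p*m) * ∑ k ∈ Icc 1 r, (ε * (Q:ℝ)^p)^k / (W (p*k) * W (p*k + p*m))
        = (∑ k ∈ Ioc 0 (n+q), g k) - (∑ k ∈ Ioc 0 m, g k)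
          - (∑ k ∈ Ioc 0 r, g k) := by
      intro m r hm hmr
      have hεm : ε ^ m = 1 := by
        rcases hε with rfl | rfl
        · simp
        · exact hm.neg_one_pow
      rw [Finset.mul_sum]
      have step : ∀ k ∈ Icc 1 r,
          U (p*m) * ((ε * (Q:ℝ)^p)^k / (W (p*k) * W (p*k + p*m)))
          = g (k+m) - g k := by
        intro k hk
        simp only [Finset.mem_Icc] at hk
        have hw1 : W (p*k) ≠ 0 := hWnz k (by simp only [Finset.mem_Icc]; omega)
        have hw2 : W (p*k + p*m) ≠ 0 := by
          have := hWnz (k+m) (by simp only [Finset.mem_Icc]; omega)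
          rwa [Nat.mul_add] at this
        have hkey := key (p*k) (p*m)
        have hεkm : ε ^ (k+m) = ε ^ k := by rw [pow_add, hεm, mul_one]
        simp only [hg]
        rw [hεkm, Nat.mul_add, mul_pow, ← pow_mul]
        rw [div_sub_div _ _ (mul_ne_zero hlamne hw2) (mul_ne_zero hlamne hw1),
          ← mul_div_assoc,
          div_eq_div_iff (mul_ne_zero hw1 hw2)
            (mul_ne_zero (mul_ne_zero hlamne hw2) (mul_ne_zero hlamne hw1))]
        linear_combination (-(ε^k * lam * W (p*k) * W (p*k + p*m))) * hkey
      rw [Finset.sum_congr rfl step, Finset.sum_sub_distrib]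
      have reindex : ∑ k ∈ Icc 1 r, g (k+m) = ∑ k ∈ Ioc m (m+r), g k := by
        have hmap : Ioc m (m+r) = (Icc 1 r).map (addRightEmbedding m) := by
          ext x
          simp only [Finset.mem_Ioc, Finset.mem_map, Finset.mem_Icc,
            addRightEmbedding_apply]
          constructor
          · rintro ⟨h1, h2⟩; exact ⟨x - m, ⟨by omega, by omega⟩, by omega⟩
          · rintro ⟨y, ⟨hy1, hy2⟩, rfl⟩; omega
        rw [hmap, Finset.sum_map]
        rfl
      rw [reindex]
      have hicc : Icc 1 r = Ioc 0 r := by ext x; simp; omega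
      rw [hicc, ← hmr]
      have hsplit := Finset.sum_Ioc_consecutive g (Nat.zero_le m)
        (Nat.le_add_right m r)
      linarith [hsplit]
    have h1 := main q n hq (by omega)
    have h2 := main n q hn (by omega)
    rw [h1, h2]; ring
end
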